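/- arXiv:2010.14843 — 5 statements merged into one kernel-verified Lean document; each statement's English description precedes it below -/
import Mathlib

section
/- Let Γ be a totally ordered ℚ-vector space and g : Γ → ℚ a step function with g(t) > 0 for all t ∈ Γ. Then for a fixed a ∈ Γ, the function h : Γ → Γ defined by h(t) = ∫_a^t g(s) ds is a bijective piecewise linear function, and the inverse of any bijective piecewise linear function Γ → Γ is again piecewise linear. -/
variable {Γ : Type*} [AddCommGroup Γ] [LinearOrder Γ] [IsOrderedAddMonoid Γ] [Module ℚ Γ]

/-- A step function `g : Γ → ℚ`: there are finitely many points
`a 0 ≤ a 1 ≤ ... ≤ a n` such that `g` is constant on each open interval between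
consecutive points and on the two unbounded open intervals. -/
def IsStepFunction (g : Γ → ℚ) : Prop :=
  ∃ (n : ℕ) (a : Fin (n + 1) → Γ), Monotone a ∧
    (∃ c : ℚ, ∀ t, t < a 0 → g t = c) ∧
    (∀ i : Fin n, ∃ c : ℚ, ∀ t, a i.castSucc < t → t < a i.succ → g t = c) ∧
    (∃ c : ℚ, ∀ t, a (Fin.last n) < t → g t = c)

/-- A piecewise linear function `h : Γ → Γ`: there are finitely many points
`a 0 ≤ a 1 ≤ ... ≤ a n` such that on each closed interval between consecutive points
(and on the two unbounded intervals) `h` has the form `t ↦ b • t + c` with `b ∈ ℚ`,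
`c ∈ Γ`. -/
def IsPiecewiseLinear (h : Γ → Γ) : Prop :=
  ∃ (n : ℕ) (a : Fin (n + 1) → Γ), Monotone a ∧
    (∃ (b : ℚ) (c : Γ), ∀ t, t ≤ a 0 → h t = b • t + c) ∧
    (∀ i : Fin n, ∃ (b : ℚ) (c : Γ),
      ∀ t, a i.castSucc ≤ t → t ≤ a i.succ → h t = b • t + c) ∧
    (∃ (b : ℚ) (c : Γ), ∀ t, a (Fin.last n) ≤ t → h t = b • t + c)

/-- `h` is the indefinite integral `h t = ∫_a^t g(s) ds` of the step function `g` based at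
`a`: it vanishes at `a` and on any interval on which `g` is constant with value `c` the
increment of `h` is `c` times the length of the interval. -/
def IsIntegralOf (g : Γ → ℚ) (a : Γ) (h : Γ → Γ) : Prop :=
  h a = 0 ∧
    ∀ s t : Γ, s < t → ∀ c : ℚ, (∀ u, s < u → u < t → g u = c) → h t - h s = c • (t - s)


set_option linter.unusedSectionVars false
set_option maxHeartbeats 1000000

theorem my_smul_pos {q : ℚ} {d : Γ} (hq : 0 < q) (hd : 0 < d) : 0 < q • d := by
  by_contra hle
  push_neg at hle
  have hnum : (0:ℤ) < q.num := Rat.num_pos.2 hq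
  have hk : (0:Γ) < q.num • d := by
    rw [← Int.toNat_of_nonneg hnum.le, natCast_zsmul]
    calc (0:Γ) < d := hd
    _ = 1 • d := (one_nsmul d).symm
    _ ≤ q.num.toNat • d := nsmul_le_nsmul_left hd.le (by omega)
  have h2 : q.den • (q • d) = q.num • d := by
    rw [← Nat.cast_smul_eq_nsmul ℚ, ← Int.cast_smul_eq_zsmul ℚ, smul_smul]
    congr 1
    rw [mul_comm]
    exact Rat.mul_den_eq_num q
  have h3 : q.den • (q • d) ≤ 0 := nsmul_nonpos hle q.den
  rw [h2] at h3
  exact absurd hk (not_lt.2 h3)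

instance (priority := 100) ratPosSMulStrictMono : PosSMulStrictMono ℚ Γ where
  smul_lt_smul_of_pos_left := by
    intro q hq x y hxy
    have := my_smul_pos hq (sub_pos.2 hxy)
    rw [smul_sub] at this
    exact sub_pos.1 this

theorem neg_smul_neg_of_neg_of_pos {b : ℚ} {d : Γ} (hb : b < 0) (hd : 0 < d) : b • d < 0 := by
  have : 0 < (-b) • d := smul_pos (neg_pos.2 hb) hd
  rw [neg_smul] at this
  exact neg_pos.1 this

theorem pos_of_smul_pos' {b : ℚ} {d : Γ} (h : 0 < b • d) (hd : 0 < d) : 0 < b := by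
  rcases lt_trichotomy b 0 with hb | hb | hb
  · exact absurd h (not_lt.2 (neg_smul_neg_of_neg_of_pos hb hd).le)
  · rw [hb, zero_smul] at h; exact absurd h (lt_irrefl _)
  · exact hb

theorem inv_smul_le' {b : ℚ} (hb : 0 < b) {x y : Γ} (h : y ≤ b • x) : b⁻¹ • y ≤ x := by
  have := smul_le_smul_of_nonneg_left h (inv_pos.2 hb).le
  rwa [inv_smul_smul₀ hb.ne'] at this

theorem le_inv_smul' {b : ℚ} (hb : 0 < b) {x y : Γ} (h : b • x ≤ y) : x ≤ b⁻¹ • y := by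
  have := smul_le_smul_of_nonneg_left h (inv_pos.2 hb).le
  rwa [inv_smul_smul₀ hb.ne'] at this

theorem glue_Iic {f : Γ → Γ} {q r : Γ} (hqr : q ≤ r)
    (h1 : StrictMonoOn f (Set.Iic q)) (h2 : StrictMonoOn f (Set.Icc q r)) :
    StrictMonoOn f (Set.Iic r) := by
  intro s hs t ht hst
  simp only [Set.mem_Iic] at hs ht
  rcases le_or_gt t q with h | h
  · exact h1 (hst.le.trans h) h hst
  · rcases le_or_gt s q with h' | h'
    · have t1 : f s ≤ f q := by
        rcases eq_or_lt_of_le h' with he | hl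
        · rw [he]
        · exact (h1 hl.le le_rfl hl).le
      exact lt_of_le_of_lt t1 (h2 ⟨le_rfl, hqr⟩ ⟨h.le, ht⟩ h)
    · exact h2 ⟨h'.le, hst.le.trans ht⟩ ⟨h.le, ht⟩ hst

theorem glue_univ {f : Γ → Γ} {q : Γ} (h1 : StrictMonoOn f (Set.Iic q))
    (h2 : StrictMonoOn f (Set.Ici q)) : StrictMono f := by
  intro s t hst
  rcases le_or_gt t q with h | h
  · exact h1 (hst.le.trans h) h hst
  · rcases le_or_gt s q with h' | h'
    · have t1 : f s ≤ f q := by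
        rcases eq_or_lt_of_le h' with he | hl
        · rw [he]
        · exact (h1 hl.le le_rfl hl).le
      exact lt_of_le_of_lt t1 (h2 le_rfl h.le h)
    · exact h2 h'.le (h'.trans hst).le hst

theorem collision {f : Γ → Γ} (hf : Function.Injective f) {p q r : Γ} {b b' : ℚ} {c c' : Γ}
    (hpq : p < q) (hqr : q < r) (hb : 0 < b) (hb' : b' < 0)
    (hL : ∀ t, p ≤ t → t ≤ q → f t = b • t + c)
    (hR : ∀ t, q ≤ t → t ≤ r → f t = b' • t + c') : False := by
  have hq2 : b • q + c = b' • q + c' := by rw [← hL q hpq.le le_rfl, hR q le_rfl hqr.le]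
  have hbb'0 : (0:ℚ) < -b' / b := div_pos (neg_pos.2 hb') hb
  have hbb' : (0:ℚ) < b / -b' := div_pos hb (neg_pos.2 hb')
  set δ : Γ := min (q - p) ((-b' / b) • (r - q)) with hδdef
  have hδpos : 0 < δ := lt_min (sub_pos.2 hpq) (smul_pos hbb'0 (sub_pos.2 hqr))
  set δ' : Γ := (b / -b') • δ with hδ'def
  have hδ'pos : 0 < δ' := smul_pos hbb' hδpos
  have hδ'le : δ' ≤ r - q := by
    have h1 : δ ≤ (-b' / b) • (r - q) := min_le_right _ _
    have h2 := smul_le_smul_of_nonneg_left h1 hbb'.le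
    have h3 : (b / -b') * (-b' / b) = 1 := by
      rw [div_mul_div_comm, mul_comm]
      rw [div_self (mul_ne_zero (neg_ne_zero.2 hb'.ne) hb.ne' : -b' * b ≠ 0)]
    rwa [smul_smul, h3, one_smul] at h2
  have hx : p ≤ q - δ := le_sub_comm.mpr (min_le_left _ _)
  have hy : q + δ' ≤ r := by
    have h4 := add_le_add_right hδ'le q
    have h5 : q + (r - q) = r := by abel
    rwa [h5] at h4
  have hfeq : f (q - δ) = f (q + δ') := by
    rw [hL _ hx (sub_le_self _ hδpos.le), hR _ (le_add_of_nonneg_right hδ'pos.le) hy]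
    have hbδ : b' • δ' = -(b • δ) := by
      rw [hδ'def, smul_smul]
      have : b' * (b / -b') = -b := by
        rw [mul_div_assoc']
        rw [mul_comm, mul_div_assoc, div_neg, div_self hb'.ne, mul_neg, mul_one]
      rw [this, neg_smul]
    rw [smul_sub, smul_add, hbδ]
    calc b • q - b • δ + c = (b • q + c) - b • δ := by abel
    _ = (b' • q + c') - b • δ := by rw [hq2]
    _ = b' • q + -(b • δ) + c' := by abel
  have hlt : q - δ < q + δ' := lt_trans (sub_lt_self _ hδpos) (lt_add_of_pos_right _ hδ'pos)
  exact absurd (hf hfeq) (ne_of_lt hlt)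

def GoodAt (f : Γ → Γ) (q : Γ) : Prop :=
  StrictMonoOn f (Set.Iic q) ∧ ∃ (p : Γ) (b : ℚ) (c : Γ), p < q ∧ 0 < b ∧ ∀ t, p ≤ t → t ≤ q → f t = b • t + c

theorem goodAt_extend {f : Γ → Γ} (hf : Function.Injective f) {q r : Γ} (hG : GoodAt f q)
    (hqr : q < r) {b' : ℚ} {c' : Γ} (hp : ∀ t, q ≤ t → t ≤ r → f t = b' • t + c') :
    GoodAt f r := by
  obtain ⟨hmono, p, b, c, hpq, hb, hw⟩ := hG
  have hb' : 0 < b' := by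
    rcases lt_trichotomy b' 0 with hneg | h0 | hpos
    · exact absurd (collision hf hpq hqr hb hneg hw hp) id
    · exfalso
      have : f q = f r := by
        rw [hp q le_rfl hqr.le, hp r hqr.le le_rfl, h0, zero_smul, zero_smul]
      exact hqr.ne (hf this)
    · exact hpos
  refine ⟨glue_Iic hqr.le hmono ?_, q, b', c', hqr, hb', hp⟩
  intro s hs t ht hst
  rw [hp s hs.1 hs.2, hp t ht.1 ht.2]
  exact add_lt_add_left (smul_lt_smul_of_pos_left hst hb') _

theorem goodAt_top {f : Γ → Γ} (hf : Function.Injective f) {q : Γ} (hG : GoodAt f q)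
    {b' : ℚ} {c' : Γ} (hp : ∀ t, q ≤ t → f t = b' • t + c') {d : Γ} (hd : 0 < d) :
    StrictMono f := by
  obtain ⟨hmono, p, b, c, hpq, hb, hw⟩ := hG
  have hb' : 0 < b' := by
    rcases lt_trichotomy b' 0 with hneg | h0 | hpos
    · exact absurd (collision hf hpq (lt_add_of_pos_right q hd) hb hneg hw
        (fun t ht1 _ => hp t ht1)) id
    · exfalso
      have : f q = f (q + d) := by
        rw [hp q le_rfl, hp (q + d) (le_add_of_nonneg_right hd.le), h0, zero_smul, zero_smul]
      exact (lt_add_of_pos_right q hd).ne (hf this)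
    · exact hpos
  refine glue_univ hmono ?_
  intro s hs t ht hst
  rw [hp s hs, hp t ht]
  exact add_lt_add_left (smul_lt_smul_of_pos_left hst hb') _

theorem neg_linear_piece {f : Γ → Γ} {b : ℚ} {c : Γ} {t : Γ} (h : f t = b • t + c) :
    -(f t) = (-b) • t + (-c) := by rw [h, neg_add, neg_smul]

theorem mono_or_anti {f : Γ → Γ} (hf : Function.Injective f) (hpl : IsPiecewiseLinear f)
    {d : Γ} (hd : 0 < d) : StrictMono f ∨ StrictMono (fun t => -(f t)) := by
  obtain ⟨n, a, amono, ⟨b0, c0, h0⟩, hmid, ⟨b1, c1, h1⟩⟩ := hpl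
  have hneginj : Function.Injective (fun t => -(f t)) := fun x y hxy => hf (neg_injective hxy)
  have base : GoodAt f (a 0) ∨ GoodAt (fun t => -(f t)) (a 0) := by
    have hb0ne : b0 ≠ 0 := by
      intro hz
      have heq : f (a 0 - d) = f (a 0) := by
        rw [h0 _ (sub_le_self _ hd.le), h0 _ le_rfl, hz, zero_smul, zero_smul]
      exact absurd (hf heq) (ne_of_lt (sub_lt_self _ hd))
    rcases hb0ne.lt_or_gt with hneg | hpos
    · right
      refine ⟨?_, a 0 - d, -b0, -c0, sub_lt_self _ hd, neg_pos.2 hneg,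
        fun t _ h2t => neg_linear_piece (h0 t h2t)⟩
      intro s hs t ht hst
      simp only [Set.mem_Iic] at hs ht
      show -(f s) < -(f t)
      rw [neg_linear_piece (h0 s hs), neg_linear_piece (h0 t ht)]
      exact add_lt_add_left (smul_lt_smul_of_pos_left hst (neg_pos.2 hneg)) _
    · left
      refine ⟨?_, a 0 - d, b0, c0, sub_lt_self _ hd, hpos, fun t _ h2t => h0 t h2t⟩
      intro s hs t ht hst
      simp only [Set.mem_Iic] at hs ht
      rw [h0 s hs, h0 t ht]
      exact add_lt_add_left (smul_lt_smul_of_pos_left hst hpos) _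
  have key : ∀ i : ℕ, ∀ hi : i < n + 1,
      GoodAt f (a ⟨i, hi⟩) ∨ GoodAt (fun t => -(f t)) (a ⟨i, hi⟩) := by
    intro i
    induction i with
    | zero =>
      intro hi
      have e0 : (⟨0, hi⟩ : Fin (n+1)) = 0 := by ext; simp
      rw [e0]; exact base
    | succ i ih =>
      intro hi
      have hi' : i < n + 1 := by omega
      have hj : i < n := by omega
      obtain ⟨b, c, hbc⟩ := hmid ⟨i, hj⟩
      have e1 : (⟨i, hj⟩ : Fin n).castSucc = ⟨i, hi'⟩ := rfl
      have e2 : (⟨i, hj⟩ : Fin n).succ = ⟨i + 1, hi⟩ := rfl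
      rcases eq_or_lt_of_le (amono (Fin.castSucc_le_succ ⟨i, hj⟩)) with heq | hlt
      · have e3 : a (⟨i + 1, hi⟩ : Fin (n+1)) = a (⟨i, hi'⟩ : Fin (n+1)) := by
          rw [← e2, ← heq, e1]
        rw [e3]; exact ih hi'
      · rcases ih hi' with hG | hG
        · left
          exact goodAt_extend hf (e1 ▸ hG) hlt hbc
        · right
          exact goodAt_extend hneginj (e1 ▸ hG) hlt
            (fun t ht1 ht2 => neg_linear_piece (hbc t ht1 ht2))
  have elast : (Fin.last n) = (⟨n, by omega⟩ : Fin (n+1)) := rfl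
  rcases key n (by omega) with hG | hG
  · left; exact goodAt_top hf (elast ▸ hG) h1 hd
  · right
    exact goodAt_top hneginj (elast ▸ hG) (fun t ht => neg_linear_piece (h1 t ht)) hd

theorem pl_of_subsingleton (hsub : Subsingleton Γ) (f : Γ → Γ) : IsPiecewiseLinear f := by
  refine ⟨0, fun _ => 0, monotone_const, ⟨0, f 0, fun t _ => ?_⟩,
    fun i => i.elim0, ⟨0, f 0, fun t _ => ?_⟩⟩ <;>
  · rw [Subsingleton.elim t 0, zero_smul, zero_add]

theorem pl_neg {f : Γ → Γ} (hf : IsPiecewiseLinear f) :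
    IsPiecewiseLinear (fun t => -(f t)) := by
  obtain ⟨n, a, amono, ⟨b0, c0, h0⟩, hmid, ⟨b1, c1, h1⟩⟩ := hf
  refine ⟨n, a, amono, ⟨-b0, -c0, fun t ht => ?_⟩, fun i => ?_, ⟨-b1, -c1, fun t ht => ?_⟩⟩
  · show -(f t) = _
    rw [h0 t ht, neg_add, neg_smul]
  · obtain ⟨b, c, hbc⟩ := hmid i
    exact ⟨-b, -c, fun t ht1 ht2 => by
      show -(f t) = _
      rw [hbc t ht1 ht2, neg_add, neg_smul]⟩
  · show -(f t) = _
    rw [h1 t ht, neg_add, neg_smul]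

theorem pl_comp_neg {f : Γ → Γ} (hf : IsPiecewiseLinear f) :
    IsPiecewiseLinear (fun t => f (-t)) := by
  obtain ⟨n, a, amono, ⟨b0, c0, h0⟩, hmid, ⟨b1, c1, h1⟩⟩ := hf
  refine ⟨n, fun i => -(a i.rev), fun i j hij => neg_le_neg (amono (Fin.rev_le_rev.2 hij)),
    ⟨-b1, c1, fun t ht => ?_⟩, fun i => ?_, ⟨-b0, c0, fun t ht => ?_⟩⟩
  · show f (-t) = _
    have h2 : a ((0 : Fin (n+1)).rev) ≤ -t := le_neg_of_le_neg ht
    rw [Fin.rev_zero] at h2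
    rw [h1 (-t) h2, smul_neg, ← neg_smul]
  · obtain ⟨b, c, hbc⟩ := hmid i.rev
    refine ⟨-b, c, fun t ht1 ht2 => ?_⟩
    show f (-t) = _
    have hb1 : a ((i.succ).rev) ≤ -t := le_neg_of_le_neg ht2
    have hb2 : -t ≤ a ((i.castSucc).rev) := neg_le.1 ht1
    rw [Fin.rev_succ] at hb1
    rw [Fin.rev_castSucc] at hb2
    rw [hbc (-t) hb1 hb2, smul_neg, ← neg_smul]
  · show f (-t) = _
    have h2 : -t ≤ a ((Fin.last n).rev) := neg_le.1 ht
    rw [Fin.rev_last] at h2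
    rw [h0 (-t) h2, smul_neg, ← neg_smul]

theorem invFun_pl_of_strictMono {f : Γ → Γ} (hfb : Function.Bijective f) (hm : StrictMono f)
    (hpl : IsPiecewiseLinear f) {d : Γ} (hd : 0 < d) :
    IsPiecewiseLinear (Function.invFun f) := by
  obtain ⟨n, a, amono, ⟨b0, c0, h0⟩, hmid, ⟨b1, c1, h1⟩⟩ := hpl
  have hleft : ∀ x, Function.invFun f (f x) = x :=
    fun x => Function.leftInverse_invFun hfb.1 x
  refine ⟨n, fun i => f (a i), fun i j hij => hm.monotone (amono hij), ?_, ?_, ?_⟩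
  · -- bottom
    have hb0 : 0 < b0 := by
      have hlt : f (a 0 - d) < f (a 0) := hm (sub_lt_self _ hd)
      rw [h0 _ (sub_le_self _ hd.le), h0 _ le_rfl] at hlt
      have h2 : b0 • (a 0 - d) < b0 • (a 0) := lt_of_add_lt_add_right hlt
      have h4 := sub_pos.2 h2
      rw [← smul_sub, sub_sub_cancel] at h4
      exact pos_of_smul_pos' h4 hd
    refine ⟨b0⁻¹, -(b0⁻¹ • c0), fun y hy => ?_⟩
    have ht : b0⁻¹ • (y - c0) ≤ a 0 := by
      apply inv_smul_le' hb0
      have : y ≤ b0 • (a 0) + c0 := by rw [← h0 _ le_rfl]; exact hy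
      exact sub_le_iff_le_add.2 this
    have hft : f (b0⁻¹ • (y - c0)) = y := by
      rw [h0 _ ht, smul_inv_smul₀ hb0.ne', sub_add_cancel]
    calc Function.invFun f y = Function.invFun f (f (b0⁻¹ • (y - c0))) := by rw [hft]
    _ = b0⁻¹ • (y - c0) := hleft _
    _ = b0⁻¹ • y + -(b0⁻¹ • c0) := by rw [smul_sub, sub_eq_add_neg]
  · -- middle
    intro i
    rcases eq_or_lt_of_le (amono (Fin.castSucc_le_succ i)) with heq | hlt
    · refine ⟨0, a i.castSucc, fun y hy1 hy2 => ?_⟩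
      have : y = f (a i.castSucc) := le_antisymm (heq ▸ hy2) hy1
      rw [this, hleft, zero_smul, zero_add]
    · obtain ⟨b, c, hbc⟩ := hmid i
      have hb : 0 < b := by
        have h2 : f (a i.castSucc) < f (a i.succ) := hm hlt
        rw [hbc _ le_rfl hlt.le, hbc _ hlt.le le_rfl] at h2
        have h3 : b • (a i.castSucc) < b • (a i.succ) := lt_of_add_lt_add_right h2
        have h4 := sub_pos.2 h3
        rw [← smul_sub] at h4
        exact pos_of_smul_pos' h4 (sub_pos.2 hlt)
      refine ⟨b⁻¹, -(b⁻¹ • c), fun y hy1 hy2 => ?_⟩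
      have ht1 : a i.castSucc ≤ b⁻¹ • (y - c) := by
        apply le_inv_smul' hb
        have : b • (a i.castSucc) + c ≤ y := by rw [← hbc _ le_rfl hlt.le]; exact hy1
        exact le_sub_iff_add_le.2 this
      have ht2 : b⁻¹ • (y - c) ≤ a i.succ := by
        apply inv_smul_le' hb
        have : y ≤ b • (a i.succ) + c := by rw [← hbc _ hlt.le le_rfl]; exact hy2
        exact sub_le_iff_le_add.2 this
      have hft : f (b⁻¹ • (y - c)) = y := by
        rw [hbc _ ht1 ht2, smul_inv_smul₀ hb.ne', sub_add_cancel]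
      calc Function.invFun f y = Function.invFun f (f (b⁻¹ • (y - c))) := by rw [hft]
      _ = b⁻¹ • (y - c) := hleft _
      _ = b⁻¹ • y + -(b⁻¹ • c) := by rw [smul_sub, sub_eq_add_neg]
  · -- top
    have hb1 : 0 < b1 := by
      have hlt : f (a (Fin.last n)) < f (a (Fin.last n) + d) := hm (lt_add_of_pos_right _ hd)
      rw [h1 _ le_rfl, h1 _ (le_add_of_nonneg_right hd.le)] at hlt
      have h2 : b1 • (a (Fin.last n)) < b1 • (a (Fin.last n) + d) := lt_of_add_lt_add_right hlt
      have h3 : (0:Γ) < b1 • d := by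
        rw [smul_add] at h2
        exact (lt_add_iff_pos_right _).1 h2
      exact pos_of_smul_pos' h3 hd
    refine ⟨b1⁻¹, -(b1⁻¹ • c1), fun y hy => ?_⟩
    have ht : a (Fin.last n) ≤ b1⁻¹ • (y - c1) := by
      apply le_inv_smul' hb1
      have : b1 • (a (Fin.last n)) + c1 ≤ y := by rw [← h1 _ le_rfl]; exact hy
      exact le_sub_iff_add_le.2 this
    have hft : f (b1⁻¹ • (y - c1)) = y := by
      rw [h1 _ ht, smul_inv_smul₀ hb1.ne', sub_add_cancel]
    calc Function.invFun f y = Function.invFun f (f (b1⁻¹ • (y - c1))) := by rw [hft]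
    _ = b1⁻¹ • (y - c1) := hleft _
    _ = b1⁻¹ • y + -(b1⁻¹ • c1) := by rw [smul_sub, sub_eq_add_neg]

theorem pos_of_qsmul_pos_right {b : ℚ} {x : Γ} (hb : 0 < b) (h : 0 < b • x) : 0 < x := by
  by_contra hx
  push_neg at hx
  have : b • x ≤ b • (0:Γ) := smul_le_smul_of_nonneg_left hx hb.le
  rw [smul_zero] at this
  exact absurd h (not_lt.2 this)

theorem mid_lt {s t : Γ} (hst : s < t) :
    s < (1/2:ℚ) • (s + t) ∧ (1/2:ℚ) • (s + t) < t := by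
  constructor
  · have h2 : (2:ℚ) • ((1/2:ℚ) • (s + t) - s) = t - s := by
      rw [smul_sub, smul_smul]
      norm_num
      rw [two_smul]
      abel
    have h3 : (0:Γ) < (2:ℚ) • ((1/2:ℚ) • (s + t) - s) := by rw [h2]; exact sub_pos.2 hst
    exact sub_pos.1 (pos_of_qsmul_pos_right (by norm_num) h3)
  · have h2 : (2:ℚ) • (t - (1/2:ℚ) • (s + t)) = t - s := by
      rw [smul_sub, smul_smul]
      norm_num
      rw [two_smul]
      abel
    have h3 : (0:Γ) < (2:ℚ) • (t - (1/2:ℚ) • (s + t)) := by rw [h2]; exact sub_pos.2 hst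
    exact sub_pos.1 (pos_of_qsmul_pos_right (by norm_num) h3)

theorem integral_bij_pl {g : Γ → ℚ} (hg : IsStepFunction g) (hgpos : ∀ t, 0 < g t) {h : Γ → Γ}
    (hI : ∀ s t : Γ, s < t → ∀ c : ℚ, (∀ u, s < u → u < t → g u = c) → h t - h s = c • (t - s)) :
    Function.Bijective h ∧ IsPiecewiseLinear h := by
  obtain ⟨n, p, pmono, ⟨cb, hcb⟩, hmid, ⟨ct, hct⟩⟩ := hg
  -- piecewise linearity
  have hbot : ∀ t, t ≤ p 0 → h t = cb • t + (h (p 0) - cb • p 0) := by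
    intro t ht
    rcases eq_or_lt_of_le ht with he | hlt
    · rw [he]; abel
    · have key := hI t (p 0) hlt cb (fun u _ hu2 => hcb u hu2)
      rw [smul_sub] at key
      calc h t = h (p 0) - (h (p 0) - h t) := by abel
      _ = h (p 0) - (cb • p 0 - cb • t) := by rw [key]
      _ = cb • t + (h (p 0) - cb • p 0) := by abel
  have htop : ∀ t, p (Fin.last n) ≤ t →
      h t = ct • t + (h (p (Fin.last n)) - ct • p (Fin.last n)) := by
    intro t ht
    rcases eq_or_lt_of_le ht with he | hlt
    · rw [← he]; abel
    · have key := hI (p (Fin.last n)) t hlt ct (fun u hu1 _ => hct u hu1)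
      rw [smul_sub] at key
      calc h t = h (p (Fin.last n)) + (h t - h (p (Fin.last n))) := by abel
      _ = h (p (Fin.last n)) + (ct • t - ct • p (Fin.last n)) := by rw [key]
      _ = ct • t + (h (p (Fin.last n)) - ct • p (Fin.last n)) := by abel
  have hpl : IsPiecewiseLinear h := by
    refine ⟨n, p, pmono, ⟨cb, h (p 0) - cb • p 0, hbot⟩, fun i => ?_,
      ⟨ct, h (p (Fin.last n)) - ct • p (Fin.last n), htop⟩⟩
    obtain ⟨c, hc⟩ := hmid i
    refine ⟨c, h (p i.castSucc) - c • p i.castSucc, fun t ht1 ht2 => ?_⟩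
    rcases eq_or_lt_of_le ht1 with he | hlt
    · rw [← he]; abel
    · have key := hI (p i.castSucc) t hlt c
        (fun u hu1 hu2 => hc u hu1 (lt_of_lt_of_le hu2 ht2))
      rw [smul_sub] at key
      calc h t = h (p i.castSucc) + (h t - h (p i.castSucc)) := by abel
      _ = h (p i.castSucc) + (c • t - c • p i.castSucc) := by rw [key]
      _ = c • t + (h (p i.castSucc) - c • p i.castSucc) := by abel
  -- strict monotonicity
  have mono0 : StrictMonoOn h (Set.Iic (p 0)) := by
    intro s hs t ht hst
    simp only [Set.mem_Iic] at hs ht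
    have hcbp : 0 < cb := by rw [← hcb s (lt_of_lt_of_le hst ht)]; exact hgpos s
    have key := hI s t hst cb (fun u _ hu2 => hcb u (lt_of_lt_of_le hu2 ht))
    have hpos := smul_pos hcbp (sub_pos.2 hst)
    rw [← key] at hpos
    exact sub_pos.1 hpos
  have monomid : ∀ i : Fin n, StrictMonoOn h (Set.Icc (p i.castSucc) (p i.succ)) := by
    intro i
    obtain ⟨c, hc⟩ := hmid i
    intro s hs t ht hst
    obtain ⟨hm1, hm2⟩ := mid_lt hst
    have hcpos : 0 < c := by
      rw [← hc _ (lt_of_le_of_lt hs.1 hm1) (lt_of_lt_of_le hm2 ht.2)]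
      exact hgpos _
    have key := hI s t hst c
      (fun u hu1 hu2 => hc u (lt_of_le_of_lt hs.1 hu1) (lt_of_lt_of_le hu2 ht.2))
    have hpos := smul_pos hcpos (sub_pos.2 hst)
    rw [← key] at hpos
    exact sub_pos.1 hpos
  have monotop : StrictMonoOn h (Set.Ici (p (Fin.last n))) := by
    intro s hs t ht hst
    simp only [Set.mem_Ici] at hs ht
    have hctp : 0 < ct := by rw [← hct t (lt_of_le_of_lt hs hst)]; exact hgpos t
    have key := hI s t hst ct (fun u hu1 _ => hct u (lt_of_le_of_lt hs hu1))
    have hpos := smul_pos hctp (sub_pos.2 hst)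
    rw [← key] at hpos
    exact sub_pos.1 hpos
  have monoIic : ∀ i : ℕ, ∀ hi : i < n + 1, StrictMonoOn h (Set.Iic (p ⟨i, hi⟩)) := by
    intro i
    induction i with
    | zero =>
      intro hi
      have e0 : (⟨0, hi⟩ : Fin (n+1)) = 0 := by ext; simp
      rw [e0]; exact mono0
    | succ i ih =>
      intro hi
      have hi' : i < n + 1 := by omega
      have hj : i < n := by omega
      exact glue_Iic (pmono (Fin.castSucc_le_succ ⟨i, hj⟩)) (ih hi') (monomid ⟨i, hj⟩)
  have hmono : StrictMono h := glue_univ (monoIic n (by omega)) monotop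
  -- surjectivity
  have hsurj : Function.Surjective h := by
    have aux : ∀ i : ℕ, ∀ hi : i < n + 1, ∀ y : Γ, y ≤ h (p ⟨i, hi⟩) → ∃ t, h t = y := by
      intro i
      induction i with
      | zero =>
        intro hi y hy
        have e0 : (⟨0, hi⟩ : Fin (n+1)) = 0 := by ext; simp
        rw [e0] at hy
        rcases eq_or_lt_of_le hy with he | hlt
        · exact ⟨p 0, he.symm⟩
        · have hcbp : 0 < cb := by
            rw [← hcb (p 0 - (h (p 0) - y)) (sub_lt_self _ (sub_pos.2 hlt))]
            exact hgpos _
          refine ⟨p 0 - cb⁻¹ • (h (p 0) - y), ?_⟩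
          have htlt : p 0 - cb⁻¹ • (h (p 0) - y) < p 0 :=
            sub_lt_self _ (smul_pos (inv_pos.2 hcbp) (sub_pos.2 hlt))
          have key := hI _ (p 0) htlt cb (fun u _ hu2 => hcb u hu2)
          rw [sub_sub_cancel, smul_inv_smul₀ hcbp.ne'] at key
          exact sub_right_injective key
      | succ i ih =>
        intro hi y hy
        have hi' : i < n + 1 := by omega
        have hj : i < n := by omega
        rcases le_or_gt y (h (p ⟨i, hi'⟩)) with hle | hgt
        · exact ih hi' y hle
        · obtain ⟨c, hc⟩ := hmid ⟨i, hj⟩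
          set q := p ((⟨i, hj⟩ : Fin n).castSucc) with hqdef
          set r := p ((⟨i, hj⟩ : Fin n).succ) with hrdef
          have hgt' : h q < y := hgt
          have hy' : y ≤ h r := hy
          have hqr : q < r := by
            rcases eq_or_lt_of_le (pmono (Fin.castSucc_le_succ ⟨i, hj⟩)) with he | hlt
            · exact absurd
                (lt_of_lt_of_le hgt' (hy'.trans (le_of_eq (congrArg h he.symm))))
                (lt_irrefl _)
            · exact hlt
          obtain ⟨hm1, hm2⟩ := mid_lt hqr
          have hcpos : 0 < c := by rw [← hc _ hm1 hm2]; exact hgpos _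
          have kfull := hI q r hqr c (fun u hu1 hu2 => hc u hu1 hu2)
          refine ⟨q + c⁻¹ • (y - h q), ?_⟩
          have ht1 : q < q + c⁻¹ • (y - h q) :=
            lt_add_of_pos_right _ (smul_pos (inv_pos.2 hcpos) (sub_pos.2 hgt'))
          have ht2 : q + c⁻¹ • (y - h q) ≤ r := by
            have hstep : y - h q ≤ c • (r - q) := by
              rw [← kfull]
              exact sub_le_sub_right hy' _
            have h2 := inv_smul_le' hcpos hstep
            have h3 := add_le_add_right h2 q
            have h4 : q + (r - q) = r := by abel
            rwa [h4] at h3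
          have key := hI q _ ht1 c (fun u hu1 hu2 => hc u hu1 (lt_of_lt_of_le hu2 ht2))
          rw [add_sub_cancel_left, smul_inv_smul₀ hcpos.ne'] at key
          exact sub_left_injective key
    intro y
    rcases le_or_gt y (h (p (Fin.last n))) with hle | hgt
    · exact aux n (by omega) y hle
    · have hctp : 0 < ct := by
        rw [← hct (p (Fin.last n) + (y - h (p (Fin.last n))))
          (lt_add_of_pos_right _ (sub_pos.2 hgt))]
        exact hgpos _
      set q := p (Fin.last n) with hqdef
      refine ⟨q + ct⁻¹ • (y - h q), ?_⟩
      have ht1 : q < q + ct⁻¹ • (y - h q) :=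
        lt_add_of_pos_right _ (smul_pos (inv_pos.2 hctp) (sub_pos.2 hgt))
      have key := hI q _ ht1 ct (fun u hu1 _ => hct u hu1)
      rw [add_sub_cancel_left, smul_inv_smul₀ hctp.ne'] at key
      exact sub_left_injective key
  exact ⟨⟨hmono.injective, hsurj⟩, hpl⟩


theorem inv_pl {f : Γ → Γ} (hfb : Function.Bijective f) (hpl : IsPiecewiseLinear f) :
    IsPiecewiseLinear (Function.invFun f) := by
  rcases subsingleton_or_nontrivial Γ with hsub | hnt
  · exact pl_of_subsingleton hsub _
  · obtain ⟨d, hd⟩ : ∃ d : Γ, 0 < d := by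
      obtain ⟨x, hx⟩ := exists_ne (0:Γ)
      rcases hx.lt_or_gt with hlt | hlt
      · exact ⟨-x, neg_pos.2 hlt⟩
      · exact ⟨x, hlt⟩
    rcases mono_or_anti hfb.1 hpl hd with hm | hm
    · exact invFun_pl_of_strictMono hfb hm hpl hd
    · have hFb : Function.Bijective (fun t => f (-t)) := by
        constructor
        · intro x y hxy
          exact neg_injective (hfb.1 hxy)
        · intro y
          obtain ⟨x, hx⟩ := hfb.2 y
          exact ⟨-x, by simpa using hx⟩
      have hFm : StrictMono (fun t => f (-t)) := by
        intro s t hst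
        have h2 := hm (neg_lt_neg hst)
        simp only [] at h2 ⊢
        exact lt_of_neg_lt_neg h2
      have hFpl : IsPiecewiseLinear (fun t => f (-t)) := pl_comp_neg hpl
      have hinv : Function.invFun f = fun y => -(Function.invFun (fun t => f (-t)) y) := by
        funext y
        apply hfb.1
        rw [Function.invFun_eq (hfb.2 y)]
        exact (Function.invFun_eq (hFb.2 y)).symm
      rw [hinv]
      exact pl_neg (invFun_pl_of_strictMono hFb hFm hFpl hd)


/-- Let `Γ` be a totally ordered `ℚ`-vector space and `g : Γ → ℚ` a step
function with `g(t) > 0` for all `t`.  Then for a fixed `a ∈ Γ`, the function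
`h(t) = ∫_a^t g(s) ds` is a bijective piecewise linear function; moreover the inverse of
any bijective piecewise linear function `Γ → Γ` is again piecewise linear. -/
theorem integral_of_positive_step_function_bijective_piecewise_linear
    (g : Γ → ℚ) (hg : IsStepFunction g) (hgpos : ∀ t, 0 < g t) (a : Γ) (h : Γ → Γ)
    (hint : IsIntegralOf g a h) :
    (Function.Bijective h ∧ IsPiecewiseLinear h) ∧
    ∀ f : Γ → Γ, Function.Bijective f → IsPiecewiseLinear f →
      IsPiecewiseLinear (Function.invFun f) := by
  exact ⟨integral_bij_pl hg hgpos hint.2, fun f hfb hfpl => inv_pl hfb hfpl⟩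
end

section
/- Let V ⊆ W be a monogenic integral extension of henselian ℤ²-valuation rings with L/K Galois of group G, residue field κ(m) of V perfect with κ(m) = κ(m'), [L:K] = [κ(p'):κ(p)], and define the lower ramification filtration G_t = {σ ∈ G : j_G(σ) ≥ t} with j_G(σ) = i_G(σ) − ε_K/|G| and i_G(σ) = min{v(σx − x) : x ∈ W}. For every t ≥ 0 in Γ_W, the map θ_t sending σ ∈ G_t to the class of σ(e)/e in U_t/U_{t+ε_L}, for any e ∈ W with v(e) = ε_L, is a well-defined group homomorphism with kernel G_{t+ε_L}; consequently G_t/G_{t+ε_L} embeds into U_t/U_{t+ε_L}. -/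
open scoped Polynomial

lemma lex01_pos : (0 : ℤ ×ₗ ℤ) < toLex (0, 1) := by
  rw [show (0 : ℤ ×ₗ ℤ) = toLex (0, 0) from rfl, Prod.Lex.lt_iff]
  simp

lemma lex_pos_le {γ : ℤ ×ₗ ℤ} (h : 0 < γ) : toLex (0, 1) ≤ γ := by
  have h' : toLex ((0 : ℤ), (0 : ℤ)) < toLex (ofLex γ) := h
  rw [Prod.Lex.lt_iff] at h'
  rw [show γ = toLex (ofLex γ) from rfl, Prod.Lex.le_iff]
  rcases h' with h' | ⟨h1, h2⟩
  · exact Or.inl h'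
  · exact Or.inr ⟨h1, by simp only [ofLex_toLex] at h2 ⊢; omega⟩

lemma wt_zero_of {a : WithTop (ℤ ×ₗ ℤ)} {c : ℤ ×ₗ ℤ} (h : a + ↑c = ↑c) : a = 0 :=
  WithTop.add_right_cancel WithTop.coe_ne_top (by rw [h, zero_add])

lemma wt_le_cancel {a b : WithTop (ℤ ×ₗ ℤ)} {c : ℤ ×ₗ ℤ} : a + ↑c ≤ b + ↑c ↔ a ≤ b :=
  WithTop.add_le_add_iff_right WithTop.coe_ne_top


/-- Let `V ⊆ W` be a monogenic integral extension of henselian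
`ℤ²`-valuation rings, with `L/K` Galois of group `G`, trivial and perfect residue extension
at the maximal ideals and `[L:K] = [κ(p'):κ(p)]` (so that `ε_K = |G|·ε_L`, encoded below by
the shape of the value group of `K`).  With `j_G(σ) = i_G(σ) − ε_K/|G| = i_G(σ) − ε_L`,
`i_G(σ) = min {w(σx − x) : x ∈ W}`, and the lower ramification filtration
`G_t = {σ : j_G(σ) ≥ t}`, for every `t ≥ 0` in `Γ_W = ℤ ×ₗ ℤ` the map
`θ_t : σ ↦ class of σ(e)/e in U_t/U_{t+ε_L}` (for any `e` with `w(e) = ε_L`) is a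
well-defined group homomorphism on `G_t` with kernel `G_{t+ε_L}`; consequently
`G_t/G_{t+ε_L}` embeds into `U_t/U_{t+ε_L}`. -/
theorem theta_homomorphism_of_ramification_filtration
    (K L : Type) [Field K] [Field L] [Algebra K L] [FiniteDimensional K L] [IsGalois K L]
    (w : AddValuation L (WithTop (ℤ ×ₗ ℤ)))
    -- the value group of `W` is `ℤ ×ₗ ℤ` (so `ε_L = (0,1)`)
    (hsurj : ∀ γ : ℤ ×ₗ ℤ, ∃ x : L, w x = (γ : WithTop (ℤ ×ₗ ℤ)))
    -- the valuation is Galois invariant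
    (hinv : ∀ (σ : L ≃ₐ[K] L) (x : L), w (σ x) = w x)
    -- the value group of `K` is `ℤ × (|G|·ℤ)`, i.e. `ε_K = |G| • ε_L`
    (hK : ∀ (x : K) (γ : ℤ ×ₗ ℤ), w (algebraMap K L x) = (γ : WithTop (ℤ ×ₗ ℤ)) →
      ∃ a b : ℤ, γ = toLex (a, (Nat.card (L ≃ₐ[K] L) : ℤ) * b))
    (hKsurj : ∀ a b : ℤ, ∃ x : K,
      w (algebraMap K L x) = ((toLex (a, (Nat.card (L ≃ₐ[K] L) : ℤ) * b) : ℤ ×ₗ ℤ) :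
        WithTop (ℤ ×ₗ ℤ)))
    -- trivial residue extension: every element of `W` is congruent mod `m'` to one of `V`
    (hres : ∀ x : L, 0 ≤ w x → ∃ y : K, 0 ≤ w (algebraMap K L y) ∧
      0 < w (x - algebraMap K L y))
    -- `V` is henselian
    (VK : Subring K) (hVK : ∀ x : K, x ∈ VK ↔ 0 ≤ w (algebraMap K L x))
    [HenselianLocalRing VK]
    -- `W = V[a]` is a monogenic integral extension of `V`
    (a : L) (ha : 0 ≤ w a)
    (hmono : ∀ x : L, 0 ≤ w x → ∃ q : K[X],
      (∀ i, 0 ≤ w (algebraMap K L (q.coeff i))) ∧ x = Polynomial.aeval a q)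
    -- `i_G(σ) = min {w (σ x − x) : x ∈ W}`, with `i_G(1) = ⊤`
    (iG : (L ≃ₐ[K] L) → WithTop (ℤ ×ₗ ℤ)) (hiG1 : iG 1 = ⊤)
    (hiG : ∀ σ : L ≃ₐ[K] L, σ ≠ 1 →
      (∃ x : L, 0 ≤ w x ∧ w (σ x - x) = iG σ) ∧
      (∀ x : L, 0 ≤ w x → iG σ ≤ w (σ x - x)))
    -- a nonnegative index `t`
    (t : ℤ ×ₗ ℤ) (ht : 0 ≤ t) :
    -- (a) for `σ ∈ G_t` (i.e. `i_G σ ≥ t + ε_L`) and `w e = ε_L`, `σ(e)/e` lies in `U_t`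
    (∀ σ : L ≃ₐ[K] L, ((t + toLex (0, 1) : ℤ ×ₗ ℤ) : WithTop (ℤ ×ₗ ℤ)) ≤ iG σ →
      ∀ e : L, w e = ((toLex (0, 1) : ℤ ×ₗ ℤ) : WithTop (ℤ ×ₗ ℤ)) →
        (t : WithTop (ℤ ×ₗ ℤ)) ≤ w (σ e / e - 1)) ∧
    -- (b) the class of `σ(e)/e` in `U_t/U_{t+ε_L}` does not depend on the choice of `e`
    (∀ σ : L ≃ₐ[K] L, ((t + toLex (0, 1) : ℤ ×ₗ ℤ) : WithTop (ℤ ×ₗ ℤ)) ≤ iG σ →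
      ∀ e e' : L, w e = ((toLex (0, 1) : ℤ ×ₗ ℤ) : WithTop (ℤ ×ₗ ℤ)) →
        w e' = ((toLex (0, 1) : ℤ ×ₗ ℤ) : WithTop (ℤ ×ₗ ℤ)) →
        ((t + toLex (0, 1) : ℤ ×ₗ ℤ) : WithTop (ℤ ×ₗ ℤ)) ≤ w (σ e / e - σ e' / e')) ∧
    -- (c) `θ_t` is a group homomorphism `G_t → U_t/U_{t+ε_L}`
    (∀ σ τ : L ≃ₐ[K] L, ((t + toLex (0, 1) : ℤ ×ₗ ℤ) : WithTop (ℤ ×ₗ ℤ)) ≤ iG σ →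
      ((t + toLex (0, 1) : ℤ ×ₗ ℤ) : WithTop (ℤ ×ₗ ℤ)) ≤ iG τ →
      ∀ e : L, w e = ((toLex (0, 1) : ℤ ×ₗ ℤ) : WithTop (ℤ ×ₗ ℤ)) →
        ((t + toLex (0, 1) : ℤ ×ₗ ℤ) : WithTop (ℤ ×ₗ ℤ)) ≤
          w ((σ * τ) e / e - (σ e / e) * (τ e / e))) ∧
    -- (d) the kernel of `θ_t` is exactly `G_{t+ε_L}`, whence the embedding
    --     `G_t/G_{t+ε_L} ↪ U_t/U_{t+ε_L}`
    (∀ σ : L ≃ₐ[K] L, ((t + toLex (0, 1) : ℤ ×ₗ ℤ) : WithTop (ℤ ×ₗ ℤ)) ≤ iG σ →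
      ∀ e : L, w e = ((toLex (0, 1) : ℤ ×ₗ ℤ) : WithTop (ℤ ×ₗ ℤ)) →
        ((((t + toLex (0, 1) + toLex (0, 1) : ℤ ×ₗ ℤ)) : WithTop (ℤ ×ₗ ℤ)) ≤ iG σ ↔
          ((t + toLex (0, 1) : ℤ ×ₗ ℤ) : WithTop (ℤ ×ₗ ℤ)) ≤ w (σ e / e - 1))) :=  by
  have hεt : ((toLex (0, 1) : ℤ ×ₗ ℤ) : WithTop (ℤ ×ₗ ℤ)) ≠ ⊤ := WithTop.coe_ne_top
  have hiG' : ∀ σ : L ≃ₐ[K] L, ∀ x : L, 0 ≤ w x → iG σ ≤ w (σ x - x) := by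
    intro σ x hx
    by_cases h : σ = 1
    · subst h; simp [hiG1]
    · exact (hiG σ h).2 x hx
  have hne : ∀ e : L, w e = ((toLex (0, 1) : ℤ ×ₗ ℤ) : WithTop (ℤ ×ₗ ℤ)) → e ≠ 0 := by
    intro e he h
    rw [h, w.map_zero] at he
    exact hεt he.symm
  have hidq : ∀ (σ : L ≃ₐ[K] L) (e : L), w e = ((toLex (0, 1) : ℤ ×ₗ ℤ) : WithTop (ℤ ×ₗ ℤ)) →
      w (σ e / e - 1) + ((toLex (0, 1) : ℤ ×ₗ ℤ) : WithTop (ℤ ×ₗ ℤ)) = w (σ e - e) := by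
    intro σ e he
    have h0 := hne e he
    rw [← he, ← w.map_mul]
    congr 1
    field_simp
  -- the key one-step approximation lemma: if `w (σ e - e) ≥ c` then for every `x` in the
  -- valuation ring, `w (σ x - x) ≥ min c (ε + i_G σ)`.
  have key : ∀ σ : L ≃ₐ[K] L, σ ≠ 1 →
      ∀ e : L, w e = ((toLex (0, 1) : ℤ ×ₗ ℤ) : WithTop (ℤ ×ₗ ℤ)) → ∀ c : ℤ ×ₗ ℤ,
      (c : WithTop (ℤ ×ₗ ℤ)) ≤ w (σ e - e) → ∀ x : L, 0 ≤ w x →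
      min (c : WithTop (ℤ ×ₗ ℤ)) (((toLex (0, 1) : ℤ ×ₗ ℤ) : WithTop (ℤ ×ₗ ℤ)) + iG σ)
        ≤ w (σ x - x) := by
    intro σ hσ1 e he c hc x hx
    have h0 := hne e he
    obtain ⟨y, hy0, hy⟩ := hres x hx
    have hD : σ x - x = σ (x - algebraMap K L y) - (x - algebraMap K L y) := by
      rw [map_sub, σ.commutes]; ring
    rw [hD]
    set x' := x - algebraMap K L y with hx'def
    by_cases hx'0 : x' = 0
    · rw [hx'0]; simp
    · obtain ⟨γ, hγ⟩ := WithTop.ne_top_iff_exists.mp (w.ne_top_iff.mpr hx'0)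
      have hγpos : 0 < γ := by
        have h1 := hy
        rw [← hγ] at h1
        exact_mod_cast h1
      have hγε : toLex (0, 1) ≤ γ := lex_pos_le hγpos
      have hze : x' / e * e = x' := div_mul_cancel₀ _ h0
      have hwz : w (x' / e) + ((toLex (0, 1) : ℤ ×ₗ ℤ) : WithTop (ℤ ×ₗ ℤ)) = ↑γ := by
        rw [← he, ← w.map_mul, hze, ← hγ]
      have hz0 : 0 ≤ w (x' / e) := by
        rw [← wt_le_cancel (c := toLex (0, 1)), hwz, zero_add]
        exact_mod_cast hγε
      have hid : σ x' - x' = σ (x' / e) * (σ e - e) + (σ (x' / e) - x' / e) * e := by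
        have h1 : σ x' = σ (x' / e) * σ e := by rw [← map_mul, hze]
        calc σ x' - x' = σ (x' / e) * σ e - x' / e * e := by rw [h1, hze]
          _ = _ := by ring
      rw [hid]
      refine w.map_le_add ?_ ?_
      · rw [w.map_mul, hinv σ]
        refine le_trans (min_le_left _ _) ?_
        calc (c : WithTop (ℤ ×ₗ ℤ)) = 0 + ↑c := (zero_add _).symm
          _ ≤ w (x' / e) + w (σ e - e) := add_le_add hz0 hc
      · rw [w.map_mul, he]
        refine le_trans (min_le_right _ _) ?_
        rw [add_comm]
        exact add_le_add_left ((hiG σ hσ1).2 _ hz0) _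
  refine ⟨?_, ?_, ?_, ?_⟩
  · -- (a)
    intro σ hσ e he
    have h2 : ((t + toLex (0, 1) : ℤ ×ₗ ℤ) : WithTop (ℤ ×ₗ ℤ)) ≤ w (σ e - e) :=
      le_trans hσ (hiG' σ e (by rw [he]; exact_mod_cast lex01_pos.le))
    rw [← hidq σ e he, WithTop.coe_add] at h2
    exact wt_le_cancel.mp h2
  · -- (b)
    intro σ hσ e e' he he'
    have h0 := hne e he
    have h0' := hne e' he'
    have hσe0 : σ e ≠ 0 := fun hh => h0 (σ.injective (hh.trans (map_zero σ).symm))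
    have hwu : w (e' / e) = 0 := by
      refine wt_zero_of (c := toLex (0, 1)) ?_
      rw [← he, ← w.map_mul, div_mul_cancel₀ _ h0, he', he]
    have hu2 : w (σ e / e') = 0 := by
      refine wt_zero_of (c := toLex (0, 1)) ?_
      rw [← he', ← w.map_mul, div_mul_cancel₀ _ h0', hinv σ e, he, he']
    have e1 : σ e / e - σ e' / e' = (σ (e' / e) - e' / e) * -(σ e / e') := by
      rw [map_div₀]
      field_simp
      ring
    rw [e1, w.map_mul, w.map_neg, hu2, add_zero]
    exact le_trans hσ (hiG' σ _ (le_of_eq hwu.symm))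
  · -- (c)
    intro σ τ hσ hτ e he
    have h0 := hne e he
    have hσe0 : σ e ≠ 0 := fun hh => h0 (σ.injective (hh.trans (map_zero σ).symm))
    have hwu : w (τ e / e) = 0 := by
      refine wt_zero_of (c := toLex (0, 1)) ?_
      rw [← he, ← w.map_mul, div_mul_cancel₀ _ h0, hinv τ e, he]
    have hu2 : w (σ e / e) = 0 := by
      refine wt_zero_of (c := toLex (0, 1)) ?_
      rw [← he, ← w.map_mul, div_mul_cancel₀ _ h0, hinv σ e, he]
    have e1 : (σ * τ) e / e - (σ e / e) * (τ e / e) = (σ (τ e / e) - τ e / e) * (σ e / e) := by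
      rw [AlgEquiv.mul_apply, map_div₀]
      field_simp
    rw [e1, w.map_mul, hu2, add_zero]
    exact le_trans hσ (hiG' σ _ (le_of_eq hwu.symm))
  · -- (d)
    intro σ hσ e he
    constructor
    · intro h
      have h2 : ((t + toLex (0, 1) + toLex (0, 1) : ℤ ×ₗ ℤ) : WithTop (ℤ ×ₗ ℤ)) ≤
          w (σ e - e) :=
        le_trans h (hiG' σ e (by rw [he]; exact_mod_cast lex01_pos.le))
      rw [← hidq σ e he, WithTop.coe_add] at h2
      exact wt_le_cancel.mp h2
    · intro h
      by_cases hσ1 : σ = 1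
      · rw [hσ1, hiG1]; exact le_top
      · have hE2 : ((t + toLex (0, 1) + toLex (0, 1) : ℤ ×ₗ ℤ) : WithTop (ℤ ×ₗ ℤ)) ≤
            w (σ e - e) := by
          rw [← hidq σ e he, WithTop.coe_add]
          exact add_le_add_left h _
        obtain ⟨x₀, hx₀, hx₀e⟩ := (hiG σ hσ1).1
        have hmin := key σ hσ1 e he _ hE2 x₀ hx₀
        rw [hx₀e] at hmin
        rcases le_total (((t + toLex (0, 1) + toLex (0, 1) : ℤ ×ₗ ℤ)) : WithTop (ℤ ×ₗ ℤ))
            (((toLex (0, 1) : ℤ ×ₗ ℤ) : WithTop (ℤ ×ₗ ℤ)) + iG σ) with hcase | hcase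
        · rwa [min_eq_left hcase] at hmin
        · rw [min_eq_right hcase] at hmin
          by_cases htop : iG σ = ⊤
          · rw [htop]; exact le_top
          · obtain ⟨γ, hγ⟩ := WithTop.ne_top_iff_exists.mp htop
            exfalso
            rw [← hγ, ← WithTop.coe_add, WithTop.coe_le_coe] at hmin
            exact absurd hmin (not_le.mpr (lt_add_of_pos_left γ lex01_pos))
end

section
/- In the setting of the ramification filtration of a monogenic integral extension W/V of henselian ℤ²-valuation rings with Galois group G: if the residue field κ(m') has characteristic 0, then G_{ε_L} = {1} and G is cyclic; if κ(m') has characteristic p > 0, then each quotient G_t/G_{t+ε_L} for t > 0 is an elementary abelian p-group (a direct product of cyclic groups of order p), G_{ε_L} is a p-group, and G/G_{ε_L} is cyclic of order prime to p. -/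
open scoped Polynomial

/-! ### Auxiliary order lemmas for `ℤ ×ₗ ℤ` and its `WithTop` -/

lemma RF.lex_le {a1 a2 b1 b2 : ℤ} (h : a1 < b1 ∨ (a1 = b1 ∧ a2 ≤ b2)) :
    (toLex (a1, a2) : ℤ ×ₗ ℤ) ≤ toLex (b1, b2) := Prod.Lex.le_iff.2 h

lemma RF.lex_lt {a1 a2 b1 b2 : ℤ} (h : a1 < b1 ∨ (a1 = b1 ∧ a2 < b2)) :
    (toLex (a1, a2) : ℤ ×ₗ ℤ) < toLex (b1, b2) := Prod.Lex.lt_iff.2 h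

lemma RF.lex_add (a1 a2 b1 b2 : ℤ) :
    (toLex (a1, a2) : ℤ ×ₗ ℤ) + toLex (b1, b2) = toLex (a1 + b1, a2 + b2) := rfl

lemma RF.lex_neg (a1 a2 : ℤ) : -(toLex (a1, a2) : ℤ ×ₗ ℤ) = toLex (-a1, -a2) := rfl

lemma RF.wcoe_neg (a : ℤ ×ₗ ℤ) :
    ((-a : ℤ ×ₗ ℤ) : WithTop (ℤ ×ₗ ℤ)) = -(a : WithTop (ℤ ×ₗ ℤ)) := rfl

lemma RF.lex_zero : (0 : ℤ ×ₗ ℤ) = toLex (0, 0) := rfl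

lemma RF.eps2 : (toLex (0,1) : ℤ ×ₗ ℤ) + toLex (0,1) = toLex (0,2) := by
  rw [RF.lex_add]; norm_num

lemma RF.eps_pos : (0 : ℤ ×ₗ ℤ) < toLex (0,1) := by
  rw [RF.lex_zero]; exact RF.lex_lt (Or.inr ⟨rfl, one_pos⟩)

lemma RF.eps_le_of_pos {γ : ℤ ×ₗ ℤ} (h : 0 < γ) : (toLex (0,1) : ℤ ×ₗ ℤ) ≤ γ := by
  rcases γ with ⟨g1, g2⟩
  rw [RF.lex_zero] at h
  rcases (Prod.Lex.lt_iff.1 h : (0:ℤ) < g1 ∨ ((0:ℤ) = g1 ∧ (0:ℤ) < g2)) with h' | ⟨h1, h2⟩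
  · exact RF.lex_le (Or.inl h')
  · exact RF.lex_le (Or.inr ⟨h1, by change (1:ℤ) ≤ g2; change (0:ℤ) < g2 at h2; omega⟩)

lemma RF.weps_le_of_pos {c : WithTop (ℤ ×ₗ ℤ)} (h : 0 < c) :
    ((toLex (0,1) : ℤ ×ₗ ℤ) : WithTop (ℤ ×ₗ ℤ)) ≤ c := by
  induction c with
  | top => exact le_top
  | coe γ =>
    rw [← WithTop.coe_zero, WithTop.coe_lt_coe] at h
    exact WithTop.coe_le_coe.2 (RF.eps_le_of_pos h)

lemma RF.wsub_eps_pos {c : WithTop (ℤ ×ₗ ℤ)}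
    (h : ((toLex (0,2) : ℤ ×ₗ ℤ) : WithTop (ℤ ×ₗ ℤ)) ≤ c) :
    0 < c + (-((toLex (0,1) : ℤ ×ₗ ℤ) : WithTop (ℤ ×ₗ ℤ))) := by
  induction c with
  | top =>
    rw [← RF.wcoe_neg, top_add]
    rw [← WithTop.coe_zero]
    exact WithTop.coe_lt_top 0
  | coe c =>
    rw [← RF.wcoe_neg, ← WithTop.coe_add, ← WithTop.coe_zero, WithTop.coe_lt_coe]
    have h' := WithTop.coe_le_coe.1 h
    have h2 : (toLex (0,2) : ℤ ×ₗ ℤ) + (-toLex (0,1)) ≤ c + (-toLex (0,1)) :=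
      add_le_add_left h' _
    rw [RF.lex_neg, RF.lex_add] at h2
    norm_num at h2
    exact lt_of_lt_of_le RF.eps_pos h2

/-! ### Valuation ring and residue ring -/

section ValRing

variable {L : Type} [Field L]

/-- The valuation subring attached to an additive valuation. -/
def RF.O (w : AddValuation L (WithTop (ℤ ×ₗ ℤ))) : Subring L where
  carrier := {x | 0 ≤ w x}
  zero_mem' := by simp
  one_mem' := by simp
  add_mem' {x y} hx hy := le_trans (le_min hx hy) (w.map_add x y)
  neg_mem' {x} hx := by simpa only [Set.mem_setOf_eq, w.map_neg] using hx
  mul_mem' {x y} hx hy := by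
    simp only [Set.mem_setOf_eq, w.map_mul] at *
    exact add_nonneg hx hy

/-- The maximal ideal of the valuation subring. -/
def RF.m (w : AddValuation L (WithTop (ℤ ×ₗ ℤ))) : Ideal (RF.O w) where
  carrier := {x | 0 < w (x : L)}
  zero_mem' := by simp
  add_mem' {x y} hx hy := lt_of_lt_of_le (lt_min hx hy) (w.map_add _ _)
  smul_mem' c x hx := by
    have hc : ((c • x : RF.O w) : L) = (c : L) * (x : L) := rfl
    simp only [Set.mem_setOf_eq, hc, w.map_mul]
    exact lt_of_lt_of_le hx (le_add_of_nonneg_left c.2)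

lemma RF.mem_m_iff (w : AddValuation L (WithTop (ℤ ×ₗ ℤ))) (x : RF.O w) :
    x ∈ RF.m w ↔ 0 < w (x : L) := Iff.rfl

lemma RF.m_prime (w : AddValuation L (WithTop (ℤ ×ₗ ℤ))) : (RF.m w).IsPrime := by
  constructor
  · intro h
    have h1 : (1 : RF.O w) ∈ RF.m w := h ▸ Submodule.mem_top
    rw [RF.mem_m_iff] at h1
    simp at h1
  · intro x y hxy
    rw [RF.mem_m_iff] at hxy
    rw [RF.mem_m_iff, RF.mem_m_iff]
    by_contra hc
    push_neg at hc
    have hcx := hc.1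
    have hcy := hc.2
    have hco : ((x * y : RF.O w) : L) = (x : L) * (y : L) := rfl
    rw [hco, w.map_mul] at hxy
    exact absurd (lt_of_lt_of_le hxy (add_nonpos hcx hcy)) (lt_irrefl 0)

end ValRing

/-- The lower ramification filtration `G_t = {σ : j_G(σ) ≥ t} = {σ : i_G(σ) ≥ t + ε_L}`
attached to the function `i_G` of a monogenic integral extension of henselian
`ℤ²`-valuation rings (here `ε_L = (0,1)` is the minimal positive element of the value
group `ℤ ×ₗ ℤ`). -/
def ramificationFiltration {G : Type*} [Group G] (iG : G → WithTop (ℤ ×ₗ ℤ))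
    (h1 : iG 1 = ⊤) (hmul : ∀ σ τ : G, min (iG σ) (iG τ) ≤ iG (σ * τ))
    (hsymm : ∀ σ : G, iG σ⁻¹ = iG σ) (t : ℤ ×ₗ ℤ) : Subgroup G where
  carrier := {σ | ((t + toLex (0, 1) : ℤ ×ₗ ℤ) : WithTop (ℤ ×ₗ ℤ)) ≤ iG σ}
  one_mem' := by simp [h1]
  mul_mem' := fun {σ τ} hσ hτ => le_trans (le_min hσ hτ) (hmul σ τ)
  inv_mem' := fun {σ} hσ => by simpa [hsymm σ] using hσ

theorem mem_ramificationFiltration_iff {G : Type*} [Group G] (iG : G → WithTop (ℤ ×ₗ ℤ))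
    (h1 : iG 1 = ⊤) (hmul : ∀ σ τ : G, min (iG σ) (iG τ) ≤ iG (σ * τ))
    (hsymm : ∀ σ : G, iG σ⁻¹ = iG σ) (t : ℤ ×ₗ ℤ) (σ : G) :
    σ ∈ ramificationFiltration iG h1 hmul hsymm t ↔
      ((t + toLex (0, 1) : ℤ ×ₗ ℤ) : WithTop (ℤ ×ₗ ℤ)) ≤ iG σ := Iff.rfl

set_option maxHeartbeats 1600000 in
/-- Structure of the ramification filtration of a monogenic integral
extension `W/V` of henselian `ℤ²`-valuation rings with Galois group `G`: if the residue
field has characteristic `0` then `G_{ε_L} = 1` and `G` is cyclic; if it has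
characteristic `p > 0` then each quotient `G_t/G_{t+ε_L}` (`t > 0`) is elementary abelian
of exponent `p`, `G_{ε_L}` is a `p`-group, and `G/G_{ε_L}` is cyclic of order prime to
`p`. -/
theorem structure_of_ramification_filtration
    (K L : Type) [Field K] [Field L] [Algebra K L] [FiniteDimensional K L] [IsGalois K L]
    (w : AddValuation L (WithTop (ℤ ×ₗ ℤ)))
    (hsurj : ∀ γ : ℤ ×ₗ ℤ, ∃ x : L, w x = (γ : WithTop (ℤ ×ₗ ℤ)))
    (hinvar : ∀ (σ : L ≃ₐ[K] L) (x : L), w (σ x) = w x)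
    (hK : ∀ (x : K) (γ : ℤ ×ₗ ℤ), w (algebraMap K L x) = (γ : WithTop (ℤ ×ₗ ℤ)) →
      ∃ a b : ℤ, γ = toLex (a, (Nat.card (L ≃ₐ[K] L) : ℤ) * b))
    (hres : ∀ x : L, 0 ≤ w x → ∃ y : K, 0 ≤ w (algebraMap K L y) ∧
      0 < w (x - algebraMap K L y))
    (VK : Subring K) (hVK : ∀ x : K, x ∈ VK ↔ 0 ≤ w (algebraMap K L x))
    [HenselianLocalRing VK]
    (a : L) (ha : 0 ≤ w a)
    (hmono : ∀ x : L, 0 ≤ w x → ∃ q : K[X],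
      (∀ i, 0 ≤ w (algebraMap K L (q.coeff i))) ∧ x = Polynomial.aeval a q)
    (iG : (L ≃ₐ[K] L) → WithTop (ℤ ×ₗ ℤ)) (h1 : iG 1 = ⊤)
    (hiG : ∀ σ : L ≃ₐ[K] L, σ ≠ 1 →
      (∃ x : L, 0 ≤ w x ∧ w (σ x - x) = iG σ) ∧
      (∀ x : L, 0 ≤ w x → iG σ ≤ w (σ x - x)))
    (hmul : ∀ σ τ : L ≃ₐ[K] L, min (iG σ) (iG τ) ≤ iG (σ * τ))
    (hsymm : ∀ σ : L ≃ₐ[K] L, iG σ⁻¹ = iG σ)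
    (hconj : ∀ σ τ : L ≃ₐ[K] L, iG (τ * σ * τ⁻¹) = iG σ) :
    -- residue characteristic zero
    ((∀ n : ℕ, 0 < n → w ((n : ℕ) : L) = 0) →
      ramificationFiltration iG h1 hmul hsymm (toLex (0, 1)) = ⊥ ∧
      IsCyclic (L ≃ₐ[K] L)) ∧
    -- residue characteristic `p > 0`
    (∀ p : ℕ, p.Prime → 0 < w ((p : ℕ) : L) →
      (∀ t : ℤ ×ₗ ℤ, 0 < t → ∀ σ τ : L ≃ₐ[K] L,
        σ ∈ ramificationFiltration iG h1 hmul hsymm t →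
        τ ∈ ramificationFiltration iG h1 hmul hsymm t →
        σ * τ * σ⁻¹ * τ⁻¹ ∈ ramificationFiltration iG h1 hmul hsymm (t + toLex (0, 1)) ∧
        σ ^ p ∈ ramificationFiltration iG h1 hmul hsymm (t + toLex (0, 1))) ∧
      IsPGroup p ↥(ramificationFiltration iG h1 hmul hsymm (toLex (0, 1))) ∧
      (haveI : (ramificationFiltration iG h1 hmul hsymm (toLex (0, 1))).Normal :=
        ⟨fun n hn g => by
          rw [mem_ramificationFiltration_iff] at hn ⊢
          rw [hconj n g]; exact hn⟩
       IsCyclic ((L ≃ₐ[K] L) ⧸ ramificationFiltration iG h1 hmul hsymm (toLex (0, 1)))) ∧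
      ¬ p ∣ (ramificationFiltration iG h1 hmul hsymm (toLex (0, 1))).index) := by
  -- minimality of `iG` over the valuation ring, for all `σ`
  have hmin : ∀ (σ : L ≃ₐ[K] L) (x : L), 0 ≤ w x → iG σ ≤ w (σ x - x) := by
    intro σ x hx
    by_cases hσ : σ = 1
    · subst hσ
      simp only [AlgEquiv.one_apply, sub_self, AddValuation.map_zero, h1, le_refl]
    · exact (hiG σ hσ).2 x hx
  -- `iG` is computed by the monogenic generator `a`
  have hpoly : ∀ (σ : L ≃ₐ[K] L) (x : L), 0 ≤ w x → w (σ a - a) ≤ w (σ x - x) := by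
    intro σ x hx
    obtain ⟨q, hq, rfl⟩ := hmono x hx
    rw [← Polynomial.aeval_algHom_apply σ a q]
    rw [Polynomial.aeval_eq_sum_range (σ a), Polynomial.aeval_eq_sum_range a,
      ← Finset.sum_sub_distrib]
    apply w.map_le_sum
    intro i _
    rw [← smul_sub]
    rw [Algebra.smul_def, w.map_mul]
    have h1' : (0 : WithTop (ℤ ×ₗ ℤ)) ≤ w (algebraMap K L (q.coeff i)) := hq i
    have h2' : w (σ a - a) ≤ w ((σ a) ^ i - a ^ i) := by
      rw [← geom_sum₂_mul (σ a) a i, w.map_mul]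
      have hg : (0 : WithTop (ℤ ×ₗ ℤ)) ≤ w (∑ j ∈ Finset.range i, (σ a) ^ j * a ^ (i - 1 - j)) := by
        apply w.map_le_sum
        intro j _
        rw [w.map_mul, w.map_pow, w.map_pow, hinvar]
        exact add_nonneg (nsmul_nonneg ha j) (nsmul_nonneg ha _)
      calc w (σ a - a) = 0 + w (σ a - a) := (zero_add _).symm
        _ ≤ w (∑ j ∈ Finset.range i, (σ a) ^ j * a ^ (i - 1 - j)) + w (σ a - a) :=
            add_le_add_left hg _
    calc w (σ a - a) ≤ w ((σ a) ^ i - a ^ i) := h2'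
      _ = 0 + w ((σ a) ^ i - a ^ i) := (zero_add _).symm
      _ ≤ w (algebraMap K L (q.coeff i)) + w ((σ a) ^ i - a ^ i) := add_le_add_left h1' _
  have hE : ∀ σ : L ≃ₐ[K] L, iG σ = w (σ a - a) := by
    intro σ
    by_cases hσ : σ = 1
    · subst hσ
      simp only [AlgEquiv.one_apply, sub_self, AddValuation.map_zero, h1]
    · obtain ⟨⟨x, hx0, hxe⟩, hminσ⟩ := hiG σ hσ
      refine le_antisymm (hminσ a ha) ?_
      rw [← hxe]
      exact hpoly σ x hx0
  -- an automorphism fixing `a` is trivial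
  have hfix : ∀ σ : L ≃ₐ[K] L, σ a = a → σ = 1 := by
    intro σ hfa
    have hO : ∀ x : L, 0 ≤ w x → σ x = x := by
      intro x hx
      obtain ⟨q, hq, rfl⟩ := hmono x hx
      rw [← Polynomial.aeval_algHom_apply σ a q, hfa]
    apply AlgEquiv.ext
    intro x
    by_cases hx0 : x = 0
    · subst hx0; simp
    · have hwx : w x ≠ ⊤ := w.ne_top_iff.2 hx0
      obtain ⟨γ, hγ⟩ := WithTop.ne_top_iff_exists.1 hwx
      obtain ⟨z, hz⟩ := hsurj (toLex (|(ofLex γ).1| + 1, 0))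
      have hz0 : z ≠ 0 := by
        intro h; rw [h, AddValuation.map_zero] at hz; exact (WithTop.top_ne_coe) hz
      have hzval : 0 ≤ w z := by
        rw [hz, ← WithTop.coe_zero, WithTop.coe_le_coe, RF.lex_zero]
        exact RF.lex_le (Or.inl (by positivity))
      have hxz : 0 ≤ w (x * z) := by
        rw [w.map_mul, ← hγ, hz, ← WithTop.coe_add, ← WithTop.coe_zero, WithTop.coe_le_coe]
        have hγ' : γ = toLex ((ofLex γ).1, (ofLex γ).2) := rfl
        rw [hγ', RF.lex_add, RF.lex_zero]
        simp only [ofLex_toLex]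
        refine RF.lex_le (Or.inl ?_)
        have := abs_nonneg (ofLex γ).1
        have := neg_abs_le (ofLex γ).1
        linarith
      have h1z : σ z = z := hO z hzval
      have h2z : σ (x * z) = x * z := hO (x * z) hxz
      have hmulz : σ x * σ z = x * z := by rw [← map_mul]; exact h2z
      rw [h1z] at hmulz
      exact mul_right_cancel₀ hz0 hmulz
  have hiG_ne : ∀ σ : L ≃ₐ[K] L, σ ≠ 1 → iG σ ≠ ⊤ := by
    intro σ hσ h
    rw [hE σ] at h
    exact hσ (hfix σ (sub_eq_zero.1 (w.top_iff.1 h)))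
  have hG0 : ∀ σ : L ≃ₐ[K] L, σ ≠ 1 →
      ((toLex (0,1) : ℤ ×ₗ ℤ) : WithTop (ℤ ×ₗ ℤ)) ≤ iG σ := by
    intro σ hσ
    rw [hE σ]
    obtain ⟨y, hy, hpos⟩ := hres a ha
    have hrw : σ a - a = σ (a - algebraMap K L y) - (a - algebraMap K L y) := by
      rw [map_sub, AlgEquiv.commutes]
      ring
    rw [hrw]
    refine w.map_le_sub ?_ (RF.weps_le_of_pos hpos)
    rw [hinvar]
    exact RF.weps_le_of_pos hpos
  have hB2 : ∀ (σ : L ≃ₐ[K] L) (y : L), ((toLex (0,2) : ℤ ×ₗ ℤ) : WithTop (ℤ ×ₗ ℤ)) ≤ w y →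
      iG σ + ((toLex (0,1) : ℤ ×ₗ ℤ) : WithTop (ℤ ×ₗ ℤ)) ≤ w (σ y - y) := by
    intro σ y hy
    by_cases hσ : σ = 1
    · subst hσ
      simp only [AlgEquiv.one_apply, sub_self, AddValuation.map_zero, h1, top_add, le_top]
    obtain ⟨π, hπ⟩ := hsurj (toLex (0,1))
    have hπ0 : π ≠ 0 := fun h => by
      rw [h, AddValuation.map_zero] at hπ; exact WithTop.top_ne_coe hπ
    have hπnn : 0 ≤ w π := by
      rw [hπ, ← WithTop.coe_zero, WithTop.coe_le_coe, RF.lex_zero]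
      exact RF.lex_le (Or.inr ⟨rfl, by norm_num⟩)
    set z := y * π⁻¹ with hzdef
    have hy' : y = π * z := by
      rw [hzdef]; field_simp
    have hwz : w z = w y + ((-toLex (0,1) : ℤ ×ₗ ℤ) : WithTop (ℤ ×ₗ ℤ)) := by
      rw [hzdef, w.map_mul, w.map_inv, hπ, RF.wcoe_neg]
    have hz_eps : ((toLex (0,1) : ℤ ×ₗ ℤ) : WithTop (ℤ ×ₗ ℤ)) ≤ w z := by
      have hkey : ((toLex (0,1) : ℤ ×ₗ ℤ) : WithTop (ℤ ×ₗ ℤ))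
          = ((toLex (0,2) : ℤ ×ₗ ℤ) : WithTop (ℤ ×ₗ ℤ))
            + ((-toLex (0,1) : ℤ ×ₗ ℤ) : WithTop (ℤ ×ₗ ℤ)) := by
        rw [← WithTop.coe_add, RF.lex_neg, RF.lex_add]
        norm_num
      rw [hkey, hwz]
      exact add_le_add_left hy _
    have hz_nn : 0 ≤ w z := le_trans (by
      rw [← WithTop.coe_zero, WithTop.coe_le_coe]
      exact le_of_lt RF.eps_pos) hz_eps
    have hdecomp : σ y - y = σ π * (σ z - z) + z * (σ π - π) := by
      rw [hy', map_mul]; ring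
    rw [hdecomp]
    apply w.map_le_add
    · rw [w.map_mul, hinvar, hπ]
      calc iG σ + ((toLex (0,1) : ℤ ×ₗ ℤ) : WithTop (ℤ ×ₗ ℤ))
          ≤ w (σ z - z) + ((toLex (0,1) : ℤ ×ₗ ℤ) : WithTop (ℤ ×ₗ ℤ)) :=
            add_le_add_left (hmin σ z hz_nn) _
        _ = ((toLex (0,1) : ℤ ×ₗ ℤ) : WithTop (ℤ ×ₗ ℤ)) + w (σ z - z) := add_comm _ _
    · rw [w.map_mul]
      calc iG σ + ((toLex (0,1) : ℤ ×ₗ ℤ) : WithTop (ℤ ×ₗ ℤ))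
          = ((toLex (0,1) : ℤ ×ₗ ℤ) : WithTop (ℤ ×ₗ ℤ)) + iG σ := add_comm _ _
        _ ≤ w z + w (σ π - π) := add_le_add hz_eps (hmin σ π hπnn)
  have hpowmono : ∀ (σ : L ≃ₐ[K] L) (n : ℕ), iG σ ≤ iG (σ ^ n) := by
    intro σ n
    induction n with
    | zero => rw [pow_zero, h1]; exact le_top
    | succ n ih =>
      rw [pow_succ]
      exact le_trans (le_min ih le_rfl) (hmul _ _)
  have htel : ∀ (σ : L ≃ₐ[K] L) (n : ℕ), (σ ^ n) a - a
      = (n : L) * (σ a - a) + ∑ k ∈ Finset.range n, ((σ ^ k) (σ a - a) - (σ a - a)) := by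
    intro σ n
    induction n with
    | zero => simp
    | succ n ih =>
      have hstep : (σ ^ (n+1)) a = (σ ^ n) (σ a) := by
        rw [pow_succ]; rfl
      have hmap : (σ ^ n) (σ a - a) = (σ ^ n) (σ a) - (σ ^ n) a := map_sub _ _ _
      rw [Finset.sum_range_succ, hstep, Nat.cast_add_one]
      linear_combination ih - hmap
  have hNat_nn : ∀ n : ℕ, (0 : WithTop (ℤ ×ₗ ℤ)) ≤ w ((n : ℕ) : L) := by
    intro n
    induction n with
    | zero => simp
    | succ n ih =>
      push_cast
      exact w.map_le_add ih (by simp)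
  have hInt_nn : ∀ m : ℤ, (0 : WithTop (ℤ ×ₗ ℤ)) ≤ w ((m : ℤ) : L) := by
    intro m
    rcases Int.natAbs_eq m with h | h
    · rw [h, Int.cast_natCast]; exact hNat_nn m.natAbs
    · rw [h, Int.cast_neg, Int.cast_natCast, w.map_neg]; exact hNat_nn m.natAbs
  -- no `n`-torsion deep in the filtration when `n` is invertible in the residue field
  have hN : ∀ σ : L ≃ₐ[K] L, σ ≠ 1 →
      ((toLex (0,2) : ℤ ×ₗ ℤ) : WithTop (ℤ ×ₗ ℤ)) ≤ iG σ →
      ∀ n : ℕ, 0 < n → w ((n : ℕ) : L) = 0 → σ ^ n ≠ 1 := by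
    intro σ hσ h2 n hn hwn hcontra
    obtain ⟨s, hs⟩ := WithTop.ne_top_iff_exists.1 (hiG_ne σ hσ)
    have hd : w (σ a - a) = (s : WithTop (ℤ ×ₗ ℤ)) := by rw [← hE σ]; exact hs.symm
    have hA : w ((n : L) * (σ a - a)) = (s : WithTop (ℤ ×ₗ ℤ)) := by
      rw [w.map_mul, hwn, zero_add, hd]
    have hB : ((s + toLex (0,1) : ℤ ×ₗ ℤ) : WithTop (ℤ ×ₗ ℤ))
        ≤ w (∑ k ∈ Finset.range n, ((σ ^ k) (σ a - a) - (σ a - a))) := by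
      apply w.map_le_sum
      intro k _
      by_cases hk : k = 0
      · subst hk
        simp only [pow_zero, AlgEquiv.one_apply, sub_self, AddValuation.map_zero, le_top]
      · calc ((s + toLex (0,1) : ℤ ×ₗ ℤ) : WithTop (ℤ ×ₗ ℤ))
            = (s : WithTop (ℤ ×ₗ ℤ)) + ((toLex (0,1) : ℤ ×ₗ ℤ) : WithTop (ℤ ×ₗ ℤ)) :=
              WithTop.coe_add _ _
          _ ≤ iG (σ ^ k) + ((toLex (0,1) : ℤ ×ₗ ℤ) : WithTop (ℤ ×ₗ ℤ)) := by
              refine add_le_add_left ?_ _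
              rw [hs]; exact hpowmono σ k
          _ ≤ w ((σ ^ k) (σ a - a) - (σ a - a)) :=
              hB2 (σ ^ k) (σ a - a) (le_trans h2 (le_of_eq (hE σ)))
    have hsum := htel σ n
    rw [hcontra] at hsum
    simp only [AlgEquiv.one_apply, sub_self] at hsum
    have hws : w ((n : L) * (σ a - a)
        + ∑ k ∈ Finset.range n, ((σ ^ k) (σ a - a) - (σ a - a)))
        = (s : WithTop (ℤ ×ₗ ℤ)) := by
      rw [w.map_add_eq_of_lt_left, hA]
      rw [hA]
      refine lt_of_lt_of_le ?_ hB
      rw [WithTop.coe_lt_coe]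
      exact lt_add_of_pos_right s RF.eps_pos
    rw [← hsum] at hws
    simp only [AddValuation.map_zero] at hws
    exact WithTop.top_ne_coe hws
  -- the residue homomorphism θ
  obtain ⟨π, hπ⟩ := hsurj (toLex (0,1))
  have hπ0 : π ≠ 0 := fun h => by
    rw [h, AddValuation.map_zero] at hπ; exact WithTop.top_ne_coe hπ
  have hπnn : 0 ≤ w π := by
    rw [hπ, ← WithTop.coe_zero, WithTop.coe_le_coe, RF.lex_zero]
    exact RF.lex_le (Or.inr ⟨rfl, by norm_num⟩)
  have hu_val : ∀ σ : L ≃ₐ[K] L, w (σ π * π⁻¹) = 0 := by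
    intro σ
    rw [w.map_mul, hinvar, w.map_inv, hπ, ← RF.wcoe_neg, ← WithTop.coe_add, RF.lex_neg,
      RF.lex_add, ← WithTop.coe_zero, RF.lex_zero]
    norm_num
  haveI hmp : (RF.m w).IsPrime := RF.m_prime w
  -- the unit attached to σ
  set u : (L ≃ₐ[K] L) → RF.O w := fun σ => ⟨σ π * π⁻¹, le_of_eq (hu_val σ).symm⟩ with hu_def
  have hθmul : ∀ σ τ : L ≃ₐ[K] L,
      Ideal.Quotient.mk (RF.m w) (u (σ * τ))
        = Ideal.Quotient.mk (RF.m w) (u σ) * Ideal.Quotient.mk (RF.m w) (u τ) := by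
    intro σ τ
    rw [← map_mul, Ideal.Quotient.eq]
    rw [RF.mem_m_iff]
    have hco : ((u (σ * τ) - u σ * u τ : RF.O w) : L)
        = ((σ * τ) π) * π⁻¹ - (σ π * π⁻¹) * (τ π * π⁻¹) := rfl
    have hσπ0 : σ π ≠ 0 := fun h => hπ0 (by
      have := congrArg σ.symm h
      simpa using this)
    have hid : ((σ * τ) π) * π⁻¹ - (σ π * π⁻¹) * (τ π * π⁻¹)
        = (σ π * π⁻¹) * (σ (τ π * π⁻¹) - τ π * π⁻¹) := by
      rw [AlgEquiv.mul_apply, map_mul σ (τ π) π⁻¹, map_inv₀]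
      field_simp
    rw [hco, hid, w.map_mul, hu_val σ, zero_add]
    have hy_nn : 0 ≤ w (τ π * π⁻¹) := le_of_eq (hu_val τ).symm
    by_cases hσ : σ = 1
    · subst hσ
      simp only [AlgEquiv.one_apply, sub_self, AddValuation.map_zero]
      rw [← WithTop.coe_zero]
      exact WithTop.coe_lt_top 0
    · exact lt_of_lt_of_le (lt_of_lt_of_le (by
        rw [← WithTop.coe_zero, WithTop.coe_lt_coe]; exact RF.eps_pos) (hG0 σ hσ))
        (hmin σ _ hy_nn)
  have hθ1 : Ideal.Quotient.mk (RF.m w) (u 1) = 1 := by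
    have : u 1 = 1 := by
      apply Subtype.ext
      show (1 : L ≃ₐ[K] L) π * π⁻¹ = ((1 : RF.O w) : L)
      rw [AlgEquiv.one_apply, mul_inv_cancel₀ hπ0]
      rfl
    rw [this, map_one]
  -- the residue character θ as a monoid homomorphism
  set θ : (L ≃ₐ[K] L) →* (RF.O w ⧸ RF.m w) :=
    { toFun := fun σ => Ideal.Quotient.mk (RF.m w) (u σ)
      map_one' := hθ1
      map_mul' := hθmul } with hθ_def
  -- kernel of θ is exactly {σ : iG σ ≥ (0,2)}
  have hker_sup : ∀ σ : L ≃ₐ[K] L,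
      ((toLex (0,2) : ℤ ×ₗ ℤ) : WithTop (ℤ ×ₗ ℤ)) ≤ iG σ → θ σ = 1 := by
    intro σ hσ2
    show Ideal.Quotient.mk (RF.m w) (u σ) = 1
    rw [← map_one (Ideal.Quotient.mk (RF.m w)), Ideal.Quotient.eq, RF.mem_m_iff]
    have hco : ((u σ - 1 : RF.O w) : L) = σ π * π⁻¹ - 1 := rfl
    have hid : σ π * π⁻¹ - 1 = (σ π - π) * π⁻¹ := by field_simp
    rw [hco, hid, w.map_mul, w.map_inv, hπ]
    exact RF.wsub_eps_pos (le_trans hσ2 (hmin σ π hπnn))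
  have hker_sub : ∀ σ : L ≃ₐ[K] L, θ σ = 1 →
      ((toLex (0,2) : ℤ ×ₗ ℤ) : WithTop (ℤ ×ₗ ℤ)) ≤ iG σ := by
    intro σ hθσ
    have hmem : (u σ - 1 : RF.O w) ∈ RF.m w := by
      rw [← Ideal.Quotient.eq, map_one]
      exact hθσ
    rw [RF.mem_m_iff] at hmem
    have hco : ((u σ - 1 : RF.O w) : L) = σ π * π⁻¹ - 1 := rfl
    rw [hco] at hmem
    -- hence w (σ π - π) ≥ (0,2)
    have hππ : ((toLex (0,2) : ℤ ×ₗ ℤ) : WithTop (ℤ ×ₗ ℤ)) ≤ w (σ π - π) := by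
      have hid : σ π - π = (σ π * π⁻¹ - 1) * π := by field_simp
      rw [hid, w.map_mul, hπ, ← RF.eps2, WithTop.coe_add]
      exact add_le_add_left (RF.weps_le_of_pos hmem) _
    -- membership estimate on the whole valuation ring
    by_cases hσ : σ = 1
    · subst hσ; rw [h1]; exact le_top
    have hall : ∀ x : L, 0 ≤ w x →
        ((toLex (0,2) : ℤ ×ₗ ℤ) : WithTop (ℤ ×ₗ ℤ)) ≤ w (σ x - x) := by
      intro x hx
      obtain ⟨y, hy, hpos⟩ := hres x hx
      have hx1 : σ x - x = σ (x - algebraMap K L y) - (x - algebraMap K L y) := by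
        rw [map_sub, AlgEquiv.commutes]; ring
      set x1 := x - algebraMap K L y with hx1def
      set z := x1 * π⁻¹ with hzdef
      have hz_nn : 0 ≤ w z := by
        rw [hzdef, w.map_mul, w.map_inv, hπ]
        have heps : ((toLex (0,1) : ℤ ×ₗ ℤ) : WithTop (ℤ ×ₗ ℤ)) ≤ w x1 :=
          RF.weps_le_of_pos hpos
        calc (0 : WithTop (ℤ ×ₗ ℤ))
            = ((toLex (0,1) : ℤ ×ₗ ℤ) : WithTop (ℤ ×ₗ ℤ))
              + (-((toLex (0,1) : ℤ ×ₗ ℤ) : WithTop (ℤ ×ₗ ℤ))) := by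
              rw [← RF.wcoe_neg, ← WithTop.coe_add, RF.lex_neg, RF.lex_add, ← WithTop.coe_zero,
                RF.lex_zero]
              norm_num
          _ ≤ w x1 + (-((toLex (0,1) : ℤ ×ₗ ℤ) : WithTop (ℤ ×ₗ ℤ))) := add_le_add_left heps _
      have hx1z : x1 = π * z := by rw [hzdef]; field_simp
      have hdecomp : σ x1 - x1 = σ π * (σ z - z) + z * (σ π - π) := by
        rw [hx1z, map_mul]; ring
      rw [hx1, hdecomp]
      apply w.map_le_add
      · rw [w.map_mul, hinvar, hπ, ← RF.eps2, WithTop.coe_add]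
        exact add_le_add_right (le_trans (hG0 σ hσ) (hmin σ z hz_nn)) _
      · rw [w.map_mul]
        calc ((toLex (0,2) : ℤ ×ₗ ℤ) : WithTop (ℤ ×ₗ ℤ))
            = 0 + ((toLex (0,2) : ℤ ×ₗ ℤ) : WithTop (ℤ ×ₗ ℤ)) := (zero_add _).symm
          _ ≤ w z + w (σ π - π) := add_le_add hz_nn hππ
    rw [hE σ]
    exact hall a ha
  -- instances
  haveI : Finite (L ≃ₐ[K] L) := Finite.of_fintype _
  have heps_mem : ∀ σ : L ≃ₐ[K] L,
      (σ ∈ ramificationFiltration iG h1 hmul hsymm (toLex (0,1)) ↔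
        ((toLex (0,2) : ℤ ×ₗ ℤ) : WithTop (ℤ ×ₗ ℤ)) ≤ iG σ) := by
    intro σ
    rw [mem_ramificationFiltration_iff, RF.eps2]
  constructor
  · -- residue characteristic zero
    intro hchar0
    have hGe_bot : ramificationFiltration iG h1 hmul hsymm (toLex (0,1)) = ⊥ := by
      ext σ
      rw [heps_mem, Subgroup.mem_bot]
      constructor
      · intro hmem
        by_contra hσ
        exact hN σ hσ hmem (orderOf σ) (orderOf_pos σ)
          (hchar0 (orderOf σ) (orderOf_pos σ)) (pow_orderOf_eq_one σ)
      · intro hσ; subst hσ; rw [h1]; exact le_top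
    refine ⟨hGe_bot, ?_⟩
    have hinj : Function.Injective θ := by
      rw [injective_iff_map_eq_one]
      intro σ hθσ
      have hmem := hker_sub σ hθσ
      by_contra hσ
      exact hN σ hσ hmem (orderOf σ) (orderOf_pos σ)
        (hchar0 (orderOf σ) (orderOf_pos σ)) (pow_orderOf_eq_one σ)
    exact isCyclic_of_subgroup_isDomain θ hinj
  · -- residue characteristic p
    intro p hp hwp
    have hweps : ((toLex (0,1) : ℤ ×ₗ ℤ) : WithTop (ℤ ×ₗ ℤ)) ≤ w ((p : ℕ) : L) :=
      RF.weps_le_of_pos hwp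
    -- coprime-to-p naturals have valuation 0
    have hcop : ∀ n : ℕ, ¬ p ∣ n → w ((n : ℕ) : L) = 0 := by
      intro n hnd
      have hcpr : Nat.Coprime p n := (Nat.Prime.coprime_iff_not_dvd hp).2 hnd
      have hic : IsCoprime (p : ℤ) (n : ℤ) := Nat.isCoprime_iff_coprime.2 hcpr
      obtain ⟨uu, vv, huv⟩ := hic
      by_contra hne
      have hpos : 0 < w ((n : ℕ) : L) := lt_of_le_of_ne (hNat_nn n) (Ne.symm hne)
      have h1L : (1 : L) = (uu : L) * ((p : ℕ) : L) + (vv : L) * ((n : ℕ) : L) := by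
        have := congrArg (fun m : ℤ => (m : L)) huv
        push_cast at this
        linear_combination -this
      have hlt : (0 : WithTop (ℤ ×ₗ ℤ)) < w (1 : L) := by
        rw [h1L]
        apply w.map_lt_add
        · rw [w.map_mul]
          exact lt_of_lt_of_le hwp (le_add_of_nonneg_left (hInt_nn uu))
        · rw [w.map_mul]
          exact lt_of_lt_of_le hpos (le_add_of_nonneg_left (hInt_nn vv))
      rw [AddValuation.map_one] at hlt
      exact lt_irrefl 0 hlt
    -- quotients are elementary abelian
    have hquot : ∀ t : ℤ ×ₗ ℤ, 0 < t → ∀ σ τ : L ≃ₐ[K] L,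
        ((t + toLex (0,1) : ℤ ×ₗ ℤ) : WithTop (ℤ ×ₗ ℤ)) ≤ iG σ →
        ((t + toLex (0,1) : ℤ ×ₗ ℤ) : WithTop (ℤ ×ₗ ℤ)) ≤ iG τ →
        ((t + toLex (0,1) + toLex (0,1) : ℤ ×ₗ ℤ) : WithTop (ℤ ×ₗ ℤ)) ≤ iG (σ * τ * σ⁻¹ * τ⁻¹) ∧
        ((t + toLex (0,1) + toLex (0,1) : ℤ ×ₗ ℤ) : WithTop (ℤ ×ₗ ℤ)) ≤ iG (σ ^ p) := by
      intro t ht σ τ hσm hτm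
      have ht2 : (toLex (0,2) : ℤ ×ₗ ℤ) ≤ t + toLex (0,1) := by
        rw [← RF.eps2]
        exact add_le_add_left (RF.eps_le_of_pos ht) _
      have hd2 : ((toLex (0,2) : ℤ ×ₗ ℤ) : WithTop (ℤ ×ₗ ℤ)) ≤ w (σ a - a) :=
        le_trans (WithTop.coe_le_coe.2 ht2) (le_trans hσm (le_of_eq (hE σ)))
      constructor
      · -- commutator
        set b := ((τ * σ)⁻¹) a with hb_def
        have hb_nn : 0 ≤ w b := by rw [hb_def, hinvar]; exact ha
        have hca : (σ * τ * σ⁻¹ * τ⁻¹) a = (σ * τ) b := by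
          rw [hb_def, ← AlgEquiv.mul_apply]
          congr 1
        have haa : a = (τ * σ) b := by
          rw [hb_def, ← AlgEquiv.mul_apply, mul_inv_cancel, AlgEquiv.one_apply]
        have hcd : (σ * τ * σ⁻¹ * τ⁻¹) a - a = (σ * τ) b - (τ * σ) b := by
          rw [hca, ← haa]
        have hid : (σ * τ) b - (τ * σ) b
            = (σ (τ b - b) - (τ b - b)) - (τ (σ b - b) - (σ b - b)) := by
          rw [AlgEquiv.mul_apply, AlgEquiv.mul_apply, map_sub σ, map_sub τ]
          ring
        have hτb2 : ((toLex (0,2) : ℤ ×ₗ ℤ) : WithTop (ℤ ×ₗ ℤ)) ≤ w (τ b - b) :=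
          le_trans (WithTop.coe_le_coe.2 ht2) (le_trans hτm (hmin τ b hb_nn))
        have hσb2 : ((toLex (0,2) : ℤ ×ₗ ℤ) : WithTop (ℤ ×ₗ ℤ)) ≤ w (σ b - b) :=
          le_trans (WithTop.coe_le_coe.2 ht2) (le_trans hσm (hmin σ b hb_nn))
        rw [hE _, hcd, hid]
        apply w.map_le_sub
        · calc ((t + toLex (0,1) + toLex (0,1) : ℤ ×ₗ ℤ) : WithTop (ℤ ×ₗ ℤ))
              = ((t + toLex (0,1) : ℤ ×ₗ ℤ) : WithTop (ℤ ×ₗ ℤ))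
                + ((toLex (0,1) : ℤ ×ₗ ℤ) : WithTop (ℤ ×ₗ ℤ)) := WithTop.coe_add _ _
            _ ≤ iG σ + ((toLex (0,1) : ℤ ×ₗ ℤ) : WithTop (ℤ ×ₗ ℤ)) := add_le_add_left hσm _
            _ ≤ w (σ (τ b - b) - (τ b - b)) := hB2 σ _ hτb2
        · calc ((t + toLex (0,1) + toLex (0,1) : ℤ ×ₗ ℤ) : WithTop (ℤ ×ₗ ℤ))
              = ((t + toLex (0,1) : ℤ ×ₗ ℤ) : WithTop (ℤ ×ₗ ℤ))
                + ((toLex (0,1) : ℤ ×ₗ ℤ) : WithTop (ℤ ×ₗ ℤ)) := WithTop.coe_add _ _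
            _ ≤ iG τ + ((toLex (0,1) : ℤ ×ₗ ℤ) : WithTop (ℤ ×ₗ ℤ)) := add_le_add_left hτm _
            _ ≤ w (τ (σ b - b) - (σ b - b)) := hB2 τ _ hσb2
      · -- p-th power
        rw [hE _, htel σ p]
        apply w.map_le_add
        · rw [w.map_mul]
          calc ((t + toLex (0,1) + toLex (0,1) : ℤ ×ₗ ℤ) : WithTop (ℤ ×ₗ ℤ))
              = ((toLex (0,1) : ℤ ×ₗ ℤ) : WithTop (ℤ ×ₗ ℤ))
                + ((t + toLex (0,1) : ℤ ×ₗ ℤ) : WithTop (ℤ ×ₗ ℤ)) := by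
                rw [← WithTop.coe_add, WithTop.coe_eq_coe]
                abel
            _ ≤ w ((p : ℕ) : L) + w (σ a - a) :=
                add_le_add hweps (le_trans hσm (le_of_eq (hE σ)))
        · apply w.map_le_sum
          intro k _
          by_cases hk : k = 0
          · subst hk
            simp only [pow_zero, AlgEquiv.one_apply, sub_self, AddValuation.map_zero, le_top]
          · calc ((t + toLex (0,1) + toLex (0,1) : ℤ ×ₗ ℤ) : WithTop (ℤ ×ₗ ℤ))
                = ((t + toLex (0,1) : ℤ ×ₗ ℤ) : WithTop (ℤ ×ₗ ℤ))
                  + ((toLex (0,1) : ℤ ×ₗ ℤ) : WithTop (ℤ ×ₗ ℤ)) := WithTop.coe_add _ _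
              _ ≤ iG (σ ^ k) + ((toLex (0,1) : ℤ ×ₗ ℤ) : WithTop (ℤ ×ₗ ℤ)) :=
                  add_le_add_left (le_trans hσm (hpowmono σ k)) _
              _ ≤ w ((σ ^ k) (σ a - a) - (σ a - a)) := hB2 (σ ^ k) _ hd2
    -- common setup for the quotient statements
    haveI hNormal : (ramificationFiltration iG h1 hmul hsymm (toLex (0, 1))).Normal :=
      ⟨fun n hn g => by
        rw [mem_ramificationFiltration_iff] at hn ⊢
        rw [hconj n g]; exact hn⟩
    have hlift_ker : ∀ σ ∈ ramificationFiltration iG h1 hmul hsymm (toLex (0, 1)), θ σ = 1 :=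
      fun σ hσ => hker_sup σ ((heps_mem σ).1 hσ)
    set f := QuotientGroup.lift (ramificationFiltration iG h1 hmul hsymm (toLex (0, 1)))
      θ hlift_ker with hf_def
    have hfinj : Function.Injective f := by
      rw [injective_iff_map_eq_one]
      intro x hx
      obtain ⟨σ, rfl⟩ := QuotientGroup.mk_surjective x
      have hθσ : θ σ = 1 := hx
      rw [QuotientGroup.eq_one_iff]
      exact (heps_mem σ).2 (hker_sub σ hθσ)
    haveI : Finite ((L ≃ₐ[K] L) ⧸ ramificationFiltration iG h1 hmul hsymm (toLex (0, 1))) :=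
      Quotient.finite _
    refine ⟨?_, ?_, ?_, ?_⟩
    · intro t ht σ τ hσm hτm
      rw [mem_ramificationFiltration_iff] at hσm hτm
      obtain ⟨hcomm, hpow⟩ := hquot t ht σ τ hσm hτm
      exact ⟨hcomm, hpow⟩
    · -- p-group
      have key : ∀ n : ℕ, ∀ σ : L ≃ₐ[K] L, orderOf σ = n →
          ((toLex (0,2) : ℤ ×ₗ ℤ) : WithTop (ℤ ×ₗ ℤ)) ≤ iG σ → ∃ k : ℕ, σ ^ p ^ k = 1 := by
        intro n
        induction n using Nat.strong_induction_on with
        | _ n ih =>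
          intro σ hord hmem
          by_cases hσ1 : σ = 1
          · exact ⟨0, by rw [hσ1]; simp⟩
          by_cases hdvd : p ∣ orderOf σ
          · have hpos : 0 < orderOf σ := orderOf_pos σ
            have hlt : orderOf (σ ^ p) < n := by
              rw [orderOf_pow, Nat.gcd_comm, Nat.gcd_eq_left hdvd, ← hord]
              exact Nat.div_lt_self hpos hp.one_lt
            obtain ⟨k, hk⟩ := ih _ hlt (σ ^ p) rfl (le_trans hmem (hpowmono σ p))
            refine ⟨k + 1, ?_⟩
            rw [pow_succ', pow_mul]
            exact hk
          · exact absurd (pow_orderOf_eq_one σ)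
              (hN σ hσ1 hmem (orderOf σ) (orderOf_pos σ) (hcop _ hdvd))
      intro g
      obtain ⟨k, hk⟩ := key (orderOf (g : L ≃ₐ[K] L)) (g : L ≃ₐ[K] L) rfl ((heps_mem _).1 g.2)
      refine ⟨k, Subtype.ext ?_⟩
      push_cast
      exact hk
    · -- cyclic quotient
      exact isCyclic_of_subgroup_isDomain f hfinj
    · -- index prime to p
      intro hdvd
      haveI : Fact p.Prime := ⟨hp⟩
      rw [Subgroup.index_eq_card] at hdvd
      obtain ⟨x, hx⟩ := exists_prime_orderOf_dvd_card' p hdvd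
      have hpz : ((p : ℕ) : (RF.O w ⧸ RF.m w)) = 0 := by
        rw [← map_natCast (Ideal.Quotient.mk (RF.m w)) p, Ideal.Quotient.eq_zero_iff_mem]
        rw [RF.mem_m_iff]
        have hcoe : (((p : ℕ) : RF.O w) : L) = ((p : ℕ) : L) := by norm_cast
        rw [hcoe]
        exact hwp
      haveI : Nontrivial (RF.O w ⧸ RF.m w) := Ideal.Quotient.nontrivial_iff.mpr hmp.ne_top
      haveI : CharP (RF.O w ⧸ RF.m w) p := (CharP.charP_iff_prime_eq_zero hp).2 hpz
      have hu1 : f x ^ p = 1 := by rw [← map_pow, ← hx, pow_orderOf_eq_one, map_one]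
      have hzero : (f x - 1) ^ p = 0 := by
        rw [sub_pow_char, hu1, one_pow, sub_self]
      have hfx : f x = 1 := sub_eq_zero.1 ((pow_eq_zero_iff hp.ne_zero).1 hzero)
      have hx1 : x = 1 := hfinj (by rw [hfx, map_one])
      rw [hx1, orderOf_one] at hx
      exact hp.one_lt.ne' hx.symm
end

section
/- In the ramification filtration of a monogenic integral extension W/V of henselian ℤ²-valuation rings with Galois group G and residue characteristic p ≥ 0: for every σ ∈ G − G_{ε_L}, one has i_G(σ) = ε_L; and for every σ ∈ G_{ε_L} and every integer n ≠ 0 prime to the residue characteristic, i_G(σ^n) = i_G(σ). Consequently i_G(σ) = i_G(τ) whenever σ and τ generate the same cyclic subgroup of G. -/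
open scoped Polynomial


private theorem aux_lexlt {a b : ℤ × ℤ} : toLex a < toLex b ↔ a.1 < b.1 ∨ a.1 = b.1 ∧ a.2 < b.2 :=
  Prod.Lex.lt_iff

private theorem aux_lexle {a b : ℤ × ℤ} : toLex a ≤ toLex b ↔ a.1 < b.1 ∨ a.1 = b.1 ∧ a.2 ≤ b.2 :=
  Prod.Lex.le_iff

private theorem aux_gap (γ : ℤ ×ₗ ℤ) (h : 0 < γ) (h2 : γ < toLex (0,2)) : γ = toLex (0,1) := by
  obtain ⟨A, B⟩ := γ
  change toLex ((0:ℤ),(0:ℤ)) < toLex (A,B) at h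
  change toLex (A,B) < toLex ((0:ℤ),(2:ℤ)) at h2
  rw [aux_lexlt] at h h2
  simp only at h h2
  have : A = 0 ∧ B = 1 := by omega
  show toLex (A, B) = _
  rw [this.1, this.2]

private theorem aux_poseps (γ : ℤ ×ₗ ℤ) (h : 0 < γ) : toLex (0,1) ≤ γ := by
  obtain ⟨A, B⟩ := γ
  change toLex ((0:ℤ),(0:ℤ)) < toLex (A,B) at h
  rw [aux_lexlt] at h; simp only at h
  show toLex ((0:ℤ),(1:ℤ)) ≤ toLex (A,B)
  rw [aux_lexle]; simp only; omega

private theorem aux_kpos (A B N : ℤ) (hN : 2 ≤ N) (h : (0:ℤ ×ₗ ℤ) < toLex (A, N*B)) :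
    toLex ((0:ℤ),(2:ℤ)) ≤ toLex (A, N*B) := by
  change toLex ((0:ℤ),(0:ℤ)) < toLex (A,N*B) at h
  rw [aux_lexlt] at h; rw [aux_lexle]; simp only at h ⊢
  rcases h with h | ⟨h1, h2⟩
  · left; omega
  · right; constructor
    · omega
    · have hB : 0 < B := by
        by_contra hB
        have : N*B ≤ 0 := mul_nonpos_of_nonneg_of_nonpos (by omega) (by omega)
        omega
      have : N*1 ≤ N*B := mul_le_mul_of_nonneg_left (by omega) (by omega)
      linarith

/-- key division-with-remainder estimate: `w (aeval s q - aeval t q) ≥ w (s - t)`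
for a polynomial `q` with integral coefficients and integral points `s`, `t`. -/
private theorem aux_fact {K L : Type} [Field K] [Field L] [Algebra K L]
    (w : AddValuation L (WithTop (ℤ ×ₗ ℤ))) (q : K[X])
    (hq : ∀ i, 0 ≤ w (algebraMap K L (q.coeff i))) (s t : L) (hs : 0 ≤ w s) (ht : 0 ≤ w t) :
    w (s - t) ≤ w (Polynomial.aeval s q - Polynomial.aeval t q) := by
  classical
  set n := q.natDegree + 1 with hn
  set D : L := ∑ i ∈ Finset.range n,
      algebraMap K L (q.coeff i) * ∑ j ∈ Finset.range i, s^j * t^(i-1-j) with hD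
  have hfact : Polynomial.aeval s q - Polynomial.aeval t q = D * (s - t) := by
    rw [Polynomial.aeval_eq_sum_range, Polynomial.aeval_eq_sum_range, ← Finset.sum_sub_distrib,
      hD, Finset.sum_mul]
    apply Finset.sum_congr rfl
    intro i _
    rw [Algebra.smul_def, Algebra.smul_def, ← mul_sub, mul_assoc, geom_sum₂_mul]
  rw [hfact, w.map_mul]
  refine le_add_of_nonneg_left ?_
  rw [hD]
  apply w.map_le_sum
  intro i _
  rw [w.map_mul]
  apply add_nonneg (hq i)
  apply w.map_le_sum
  intro j _
  rw [w.map_mul, w.map_pow, w.map_pow]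
  exact add_nonneg (nsmul_nonneg hs j) (nsmul_nonneg ht _)

/-- In the ramification theory of a monogenic integral extension `W/V`
of henselian `ℤ²`-valuation rings with Galois group `G` and residue characteristic
`p ≥ 0`: every `σ ∈ G − G_{ε_L}` has `i_G(σ) = ε_L`; for every `σ ∈ G_{ε_L}` and every
integer `n ≠ 0` prime to the residue characteristic, `i_G(σ^n) = i_G(σ)`; consequently
`i_G(σ) = i_G(τ)` whenever `σ` and `τ` generate the same cyclic subgroup of `G`.
(Here `ε_L = (0,1)` is the minimal positive element of `Γ_W = ℤ ×ₗ ℤ`, and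
`σ ∈ G_{ε_L}` means `i_G(σ) ≥ 2·ε_L`.) -/
theorem iG_values_of_ramification_filtration
    (K L : Type) [Field K] [Field L] [Algebra K L] [FiniteDimensional K L] [IsGalois K L]
    (w : AddValuation L (WithTop (ℤ ×ₗ ℤ)))
    (hsurj : ∀ γ : ℤ ×ₗ ℤ, ∃ x : L, w x = (γ : WithTop (ℤ ×ₗ ℤ)))
    (hinvar : ∀ (σ : L ≃ₐ[K] L) (x : L), w (σ x) = w x)
    (hK : ∀ (x : K) (γ : ℤ ×ₗ ℤ), w (algebraMap K L x) = (γ : WithTop (ℤ ×ₗ ℤ)) →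
      ∃ a b : ℤ, γ = toLex (a, (Nat.card (L ≃ₐ[K] L) : ℤ) * b))
    (hres : ∀ x : L, 0 ≤ w x → ∃ y : K, 0 ≤ w (algebraMap K L y) ∧
      0 < w (x - algebraMap K L y))
    (VK : Subring K) (hVK : ∀ x : K, x ∈ VK ↔ 0 ≤ w (algebraMap K L x))
    [HenselianLocalRing VK]
    (a : L) (ha : 0 ≤ w a)
    (hmono : ∀ x : L, 0 ≤ w x → ∃ q : K[X],
      (∀ i, 0 ≤ w (algebraMap K L (q.coeff i))) ∧ x = Polynomial.aeval a q)
    (iG : (L ≃ₐ[K] L) → WithTop (ℤ ×ₗ ℤ)) (h1 : iG 1 = ⊤)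
    (hiG : ∀ σ : L ≃ₐ[K] L, σ ≠ 1 →
      (∃ x : L, 0 ≤ w x ∧ w (σ x - x) = iG σ) ∧
      (∀ x : L, 0 ≤ w x → iG σ ≤ w (σ x - x)))
    -- the residue characteristic `p`, either `0` or a prime
    (p : ℕ) (hp : p = 0 ∨ p.Prime)
    (hchar0 : p = 0 → ∀ n : ℕ, 0 < n → w ((n : ℕ) : L) = 0)
    (hcharp : 0 < p → 0 < w ((p : ℕ) : L)) :
    -- `σ ∉ G_{ε_L}` (and `σ ≠ 1`) implies `i_G(σ) = ε_L`
    (∀ σ : L ≃ₐ[K] L, σ ≠ 1 →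
      ¬ (((toLex (0, 1) + toLex (0, 1) : ℤ ×ₗ ℤ) : WithTop (ℤ ×ₗ ℤ)) ≤ iG σ) →
      iG σ = ((toLex (0, 1) : ℤ ×ₗ ℤ) : WithTop (ℤ ×ₗ ℤ))) ∧
    -- for `σ ∈ G_{ε_L}` and `n` prime to the residue characteristic, `i_G(σ^n) = i_G(σ)`
    (∀ σ : L ≃ₐ[K] L,
      ((toLex (0, 1) + toLex (0, 1) : ℤ ×ₗ ℤ) : WithTop (ℤ ×ₗ ℤ)) ≤ iG σ →
      ∀ n : ℤ, ¬ ((p : ℤ) ∣ n) → iG (σ ^ n) = iG σ) ∧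
    -- if `σ` and `τ` generate the same cyclic subgroup then `i_G(σ) = i_G(τ)`
    (∀ σ τ : L ≃ₐ[K] L, Subgroup.zpowers σ = Subgroup.zpowers τ → iG σ = iG τ) := by
  classical
  have heps2 : (toLex (0, 1) + toLex (0, 1) : ℤ ×ₗ ℤ) = toLex (0,2) := by decide
  -- `w` is nonneg on naturals
  have wnat : ∀ n : ℕ, 0 ≤ w ((n : ℕ) : L) := by
    intro n
    induction n with
    | zero => simp
    | succ n ih =>
      push_cast
      exact w.map_le_add (by push_cast at ih; exact ih) (le_of_eq w.map_one.symm)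
  have wint : ∀ z : ℤ, 0 ≤ w ((z : ℤ) : L) := by
    intro z
    rcases z with k | k
    · simpa using wnat k
    · rw [Int.cast_negSucc, w.map_neg]; exact_mod_cast wnat (k+1)
  -- an automorphism fixing all integral elements is trivial
  have hfix : ∀ σ : L ≃ₐ[K] L, (∀ x : L, 0 ≤ w x → σ x = x) → σ = 1 := by
    intro σ h
    ext x
    show σ x = x
    rcases le_or_gt 0 (w x) with hx | hx
    · exact h x hx
    · have hne : w x ≠ ⊤ := fun h0 => not_top_lt (h0 ▸ hx)
      obtain ⟨γ, hγ⟩ := WithTop.ne_top_iff_exists.mp hne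
      obtain ⟨z, hz⟩ := hsurj (-γ)
      have hz0 : z ≠ 0 := by
        intro h0; rw [h0, w.map_zero] at hz; exact (WithTop.coe_ne_top hz.symm).elim
      have hγneg : γ < 0 := by
        rw [← hγ] at hx; exact_mod_cast hx
      have h1z : 0 ≤ w z := by
        rw [hz, ← WithTop.coe_zero, WithTop.coe_le_coe]
        simpa using le_of_lt hγneg
      have h2 : 0 ≤ w (x*z) := by
        rw [w.map_mul, ← hγ, hz, ← WithTop.coe_add, ← WithTop.coe_zero, WithTop.coe_le_coe]
        simp
      have hxz := h (x*z) h2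
      rw [map_mul, h z h1z] at hxz
      exact mul_right_cancel₀ hz0 hxz
  -- `i_G(σ) = w (σ a - a)`
  have iG_eq : ∀ σ : L ≃ₐ[K] L, iG σ = w (σ a - a) := by
    intro σ
    by_cases hσ : σ = 1
    · subst hσ
      rw [h1]
      show _ = w ((1 : L ≃ₐ[K] L) a - a)
      rw [AlgEquiv.one_apply, sub_self, w.map_zero]
    · obtain ⟨⟨x0, hx00, hx0⟩, hle⟩ := hiG σ hσ
      refine le_antisymm (hle a ha) ?_
      rw [← hx0]
      obtain ⟨q, hq, hxq⟩ := hmono x0 hx00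
      rw [hxq, ← Polynomial.aeval_algHom_apply σ a q]
      exact aux_fact w q hq (σ a) a (by rw [hinvar]; exact ha) ha
  -- fixedness of `a` implies triviality
  have hgen : ∀ σ : L ≃ₐ[K] L, σ a = a → σ = 1 := by
    intro σ hσa
    apply hfix
    intro x hx
    obtain ⟨q, hq, hxq⟩ := hmono x hx
    rw [hxq, ← Polynomial.aeval_algHom_apply σ a q, hσa]
  have iG_ne_top : ∀ σ : L ≃ₐ[K] L, σ ≠ 1 → iG σ ≠ ⊤ := by
    intro σ hσ htop
    rw [iG_eq σ] at htop
    apply hσ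
    apply hgen
    have := (w.top_iff).mp htop
    rwa [sub_eq_zero] at this
  -- telescoping
  have tel : ∀ (σ : L ≃ₐ[K] L) (k : ℕ), w (σ a - a) ≤ w ((σ^k) a - a) := by
    intro σ k
    induction k with
    | zero => simp
    | succ k ih =>
      have hrw : (σ^(k+1)) a - a = σ ((σ^k) a - a) + (σ a - a) := by
        rw [map_sub, pow_succ', AlgEquiv.mul_apply]
        ring
      rw [hrw]
      exact w.map_le_add (by rw [hinvar]; exact ih) le_rfl
  have winv : ∀ σ : L ≃ₐ[K] L, w (σ⁻¹ a - a) = w (σ a - a) := by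
    intro σ
    have hσ : σ (σ⁻¹ a - a) = a - σ a := by
      rw [map_sub]
      congr 1
      exact σ.apply_symm_apply a
    calc w (σ⁻¹ a - a) = w (σ (σ⁻¹ a - a)) := (hinvar σ _).symm
    _ = w (a - σ a) := by rw [hσ]
    _ = w (σ a - a) := w.map_sub_swap _ _
  have iG_mono : ∀ (σ : L ≃ₐ[K] L) (n : ℤ), iG σ ≤ iG (σ ^ n) := by
    intro σ n
    rw [iG_eq, iG_eq]
    rcases n with k | k
    · rw [Int.ofNat_eq_coe, zpow_natCast]; exact tel σ k
    · rw [zpow_negSucc, winv]; exact tel σ (k+1)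

  -- ** Core claim **: if `ρ ≠ 1` has prime order `ℓ` and `i_G(ρ) ≥ 2ε` then `w ℓ > 0`.
  have Hcore : ∀ ρ : L ≃ₐ[K] L, ρ ≠ 1 →
      (((toLex (0,2) : ℤ ×ₗ ℤ)) : WithTop (ℤ ×ₗ ℤ)) ≤ iG ρ →
      ∀ ℓ : ℕ, ℓ.Prime → ρ ^ ℓ = 1 → 0 < w ((ℓ : ℕ) : L) := by
    intro ρ hρ hρε ℓ hℓ hρℓ
    by_contra hwl
    have hwl0 : w ((ℓ:ℕ) : L) = 0 := le_antisymm (not_lt.mp hwl) (wnat ℓ)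
    haveI : Nontrivial (L ≃ₐ[K] L) := nontrivial_of_ne ρ 1 hρ
    have hN2 : 2 ≤ (Nat.card (L ≃ₐ[K] L) : ℤ) := by
      have := Finite.one_lt_card_iff_nontrivial.mpr ‹Nontrivial (L ≃ₐ[K] L)›
      exact_mod_cast this
    -- the normalized generator `c` of value `ε`
    obtain ⟨y, hy0, hyc⟩ := hres a ha
    set c : L := a - algebraMap K L y with hc
    have hcpos : 0 < w c := hyc
    have hdisp : ∀ τ : L ≃ₐ[K] L, τ c - c = τ a - a := by
      intro τ
      rw [hc, map_sub, AlgEquiv.commutes]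
      ring
    have hceps : w c = ((toLex (0,1) : ℤ ×ₗ ℤ) : WithTop (ℤ ×ₗ ℤ)) := by
      have hc2 : ¬ ((((toLex (0,2) : ℤ ×ₗ ℤ)) : WithTop (ℤ ×ₗ ℤ)) ≤ w c) := by
        intro hge
        obtain ⟨z, hz⟩ := hsurj (toLex (0,1))
        have hz0 : 0 ≤ w z := by
          rw [hz, ← WithTop.coe_zero, WithTop.coe_le_coe]
          decide
        obtain ⟨q, hq, hzq⟩ := hmono z hz0
        set E : K := Polynomial.aeval y q with hE
        have hfac : w c ≤ w (z - algebraMap K L E) := by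
          rw [hzq, hE, ← Polynomial.aeval_algebraMap_apply, hc]
          exact aux_fact w q hq a (algebraMap K L y) ha hy0
        have hzE : (((toLex (0,2) : ℤ ×ₗ ℤ)) : WithTop (ℤ ×ₗ ℤ)) ≤ w (z - algebraMap K L E) :=
          le_trans hge hfac
        have hEbig : (((toLex (0,2) : ℤ ×ₗ ℤ)) : WithTop (ℤ ×ₗ ℤ)) ≤ w (algebraMap K L E) := by
          rcases eq_or_ne (w (algebraMap K L E)) ⊤ with htopE | hneE
          · rw [htopE]; exact le_top
          · obtain ⟨γ, hγ⟩ := WithTop.ne_top_iff_exists.mp hneE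
            obtain ⟨A, B, hAB⟩ := hK E γ hγ.symm
            have hEw : 0 < w (algebraMap K L E) := by
              have hrw : algebraMap K L E = z - (z - algebraMap K L E) := by ring
              rw [hrw]
              have hmin : (((toLex (0,1) : ℤ ×ₗ ℤ)) : WithTop (ℤ ×ₗ ℤ)) ≤
                  w (z - (z - algebraMap K L E)) := by
                apply w.map_le_sub (le_of_eq hz.symm)
                refine le_trans ?_ hzE
                rw [WithTop.coe_le_coe]
                decide
              refine lt_of_lt_of_le ?_ hmin
              rw [← WithTop.coe_zero, WithTop.coe_lt_coe]
              decide
            have hγpos : 0 < γ := by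
              rw [← hγ, ← WithTop.coe_zero, WithTop.coe_lt_coe] at hEw
              exact hEw
            have hγ2 : toLex ((0:ℤ),(2:ℤ)) ≤ γ := by
              rw [hAB] at hγpos ⊢
              exact aux_kpos A B _ hN2 hγpos
            rw [← hγ, WithTop.coe_le_coe]
            exact hγ2
        have : (((toLex (0,2) : ℤ ×ₗ ℤ)) : WithTop (ℤ ×ₗ ℤ)) ≤ w z := by
          have hzrw : z = (z - algebraMap K L E) + algebraMap K L E := by ring
          rw [hzrw]
          exact w.map_le_add hzE hEbig
        rw [hz, WithTop.coe_le_coe] at this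
        exact absurd this (by decide)
      have hcne : w c ≠ ⊤ := fun h => hc2 (h ▸ le_top)
      obtain ⟨γ, hγ⟩ := WithTop.ne_top_iff_exists.mp hcne
      rw [← hγ] at hcpos hc2 ⊢
      rw [WithTop.coe_eq_coe]
      apply aux_gap
      · rw [← WithTop.coe_zero, WithTop.coe_lt_coe] at hcpos; exact hcpos
      · have := lt_of_not_ge hc2
        rwa [WithTop.coe_lt_coe] at this
    -- value of `ρ c - c`
    have hρc : w (ρ c - c) = iG ρ := by rw [hdisp, ← iG_eq]
    obtain ⟨t', ht'⟩ := WithTop.ne_top_iff_exists.mp (iG_ne_top ρ hρ)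
    have ht'2 : toLex ((0:ℤ),(2:ℤ)) ≤ t' := by
      rw [← WithTop.coe_le_coe, ht']
      exact hρε
    have hcne0 : c ≠ 0 := by
      intro h
      rw [h, w.map_zero] at hceps
      exact (WithTop.coe_ne_top hceps.symm).elim
    set β : L := (ρ c - c) / c with hβdef
    set s' : ℤ ×ₗ ℤ := t' - toLex (0,1) with hs'
    have hs't : s' + toLex (0,1) = t' := by rw [hs']; abel
    have hs'pos : 0 < s' := by
      rw [hs']
      have h01 : toLex ((0:ℤ),(1:ℤ)) < t' := lt_of_lt_of_le (by decide) ht'2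
      exact sub_pos.mpr h01
    have hs't' : s' < t' := by
      rw [hs']
      exact sub_lt_self t' (by decide)
    have hβ : w β = ((s' : ℤ ×ₗ ℤ) : WithTop (ℤ ×ₗ ℤ)) := by
      have hβc : β * c = ρ c - c := by
        rw [hβdef]; field_simp
      have : w β + w c = ((t' : ℤ ×ₗ ℤ) : WithTop (ℤ ×ₗ ℤ)) := by
        rw [← w.map_mul, hβc, hρc, ← ht']
      rw [hceps] at this
      apply WithTop.add_right_cancel (WithTop.coe_ne_top (a := (toLex (0,1) : ℤ ×ₗ ℤ)))
      rw [this, ← WithTop.coe_add, hs't]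
    have hβ0 : 0 ≤ w β := by
      rw [hβ, ← WithTop.coe_zero, WithTop.coe_le_coe]
      exact le_of_lt hs'pos
    have hBw : ∀ k : ℕ, w ((ρ^k) β) = ((s' : ℤ ×ₗ ℤ) : WithTop (ℤ ×ₗ ℤ)) := by
      intro k
      rw [hinvar]
      exact hβ
    have hSw : ∀ m : ℕ, ((s' : ℤ ×ₗ ℤ) : WithTop (ℤ ×ₗ ℤ)) ≤
        w (∑ k ∈ Finset.range m, (ρ^k) β) := by
      intro m
      exact w.map_le_sum (fun i _ => le_of_eq (hBw i).symm)
    -- product expansion estimate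
    have hexp : ∀ m : ℕ, (((s' + s' : ℤ ×ₗ ℤ)) : WithTop (ℤ ×ₗ ℤ)) ≤
        w (∏ k ∈ Finset.range m, (1 + (ρ^k) β) - 1 - ∑ k ∈ Finset.range m, (ρ^k) β) := by
      intro m
      induction m with
      | zero => simp
      | succ m ih =>
        rw [Finset.prod_range_succ, Finset.sum_range_succ]
        have hrw : (∏ k ∈ Finset.range m, (1 + (ρ^k) β)) * (1 + (ρ^m) β) - 1 -
            ((∑ k ∈ Finset.range m, (ρ^k) β) + (ρ^m) β)
            = (∏ k ∈ Finset.range m, (1 + (ρ^k) β) - 1 - ∑ k ∈ Finset.range m, (ρ^k) β) *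
                (1 + (ρ^m) β) +
              (∑ k ∈ Finset.range m, (ρ^k) β) * ((ρ^m) β) := by ring
        rw [hrw]
        apply w.map_le_add
        · rw [w.map_mul]
          refine le_trans ih (le_add_of_nonneg_right ?_)
          apply w.map_le_add (le_of_eq w.map_one.symm)
          rw [hBw m, ← WithTop.coe_zero, WithTop.coe_le_coe]
          exact le_of_lt hs'pos
        · rw [w.map_mul, WithTop.coe_add]
          exact add_le_add (hSw m) (le_of_eq (hBw m).symm)
    -- telescoping product
    have hprod : ∀ m : ℕ, (∏ k ∈ Finset.range m, (1 + (ρ^k) β)) = (ρ^m) c / c := by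
      intro m
      induction m with
      | zero => simp [div_self hcne0]
      | succ m ih =>
        rw [Finset.prod_range_succ, ih]
        have h1β : (1:L) + β = ρ c / c := by
          rw [hβdef]; field_simp; ring
        have hmapm : (1:L) + (ρ^m) β = (ρ^(m+1)) c / (ρ^m) c := by
          have : (1:L) + (ρ^m) β = (ρ^m) (1 + β) := by rw [map_add, map_one]
          rw [this, h1β, map_div₀, pow_succ, AlgEquiv.mul_apply]
        rw [hmapm]
        have hmne : (ρ^m) c ≠ 0 := fun h => hcne0 ((ρ^m).injective (h.trans (map_zero _).symm))
        have hm1ne : (ρ^(m+1)) c ≠ 0 :=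
          fun h => hcne0 ((ρ^(m+1)).injective (h.trans (map_zero _).symm))
        field_simp
    have hP1 : (∏ k ∈ Finset.range ℓ, (1 + (ρ^k) β)) = 1 := by
      rw [hprod, hρℓ]
      show (1 : L ≃ₐ[K] L) c / c = 1
      rw [AlgEquiv.one_apply, div_self hcne0]
    haveI := Fact.mk hℓ
    have hordρ : orderOf ρ = ℓ := orderOf_eq_prime hρℓ hρ
    -- the sum of the conjugate differences
    have hD : ((t' : ℤ ×ₗ ℤ) : WithTop (ℤ ×ₗ ℤ)) ≤
        w (∑ k ∈ Finset.range ℓ, ((ρ^k) β - β)) := by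
      apply w.map_le_sum
      intro k hk
      rcases Nat.eq_zero_or_pos k with hk0 | hkpos
      · subst hk0
        simp
      · have hρk : ρ^k ≠ 1 := by
          intro h
          have hdvd := orderOf_dvd_of_pow_eq_one h
          rw [hordρ] at hdvd
          have := Nat.le_of_dvd hkpos hdvd
          have := Finset.mem_range.mp hk
          omega
        refine le_trans ?_ ((hiG (ρ^k) hρk).2 β hβ0)
        rw [ht']
        have := iG_mono ρ (k : ℤ)
        rwa [zpow_natCast] at this
    have hSsum : (∑ k ∈ Finset.range ℓ, (ρ^k) β) =
        ((ℓ:ℕ) : L) * β + ∑ k ∈ Finset.range ℓ, ((ρ^k) β - β) := by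
      rw [Finset.sum_sub_distrib, Finset.sum_const, Finset.card_range, nsmul_eq_mul]
      ring
    have hwS : (((s' + s' : ℤ ×ₗ ℤ)) : WithTop (ℤ ×ₗ ℤ)) ≤
        w (∑ k ∈ Finset.range ℓ, (ρ^k) β) := by
      have h := hexp ℓ
      rw [hP1] at h
      have hrw : (1:L) - 1 - ∑ k ∈ Finset.range ℓ, (ρ^k) β =
          -(∑ k ∈ Finset.range ℓ, (ρ^k) β) := by ring
      rwa [hrw, w.map_neg] at h
    have hwlβ : w (((ℓ:ℕ):L) * β) = ((s' : ℤ ×ₗ ℤ) : WithTop (ℤ ×ₗ ℤ)) := by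
      rw [w.map_mul, hwl0, zero_add, hβ]
    have hgt : ((s' : ℤ ×ₗ ℤ) : WithTop (ℤ ×ₗ ℤ)) < w (((ℓ:ℕ):L) * β) := by
      have hrw : ((ℓ:ℕ):L) * β = (∑ k ∈ Finset.range ℓ, (ρ^k) β) -
          ∑ k ∈ Finset.range ℓ, ((ρ^k) β - β) := by
        rw [hSsum]; ring
      rw [hrw]
      have hlt1 : ((s' : ℤ ×ₗ ℤ) : WithTop (ℤ ×ₗ ℤ)) < w (∑ k ∈ Finset.range ℓ, (ρ^k) β) := by
        refine lt_of_lt_of_le ?_ hwS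
        rw [WithTop.coe_lt_coe]
        exact lt_add_of_pos_right s' hs'pos
      have hlt2 : ((s' : ℤ ×ₗ ℤ) : WithTop (ℤ ×ₗ ℤ)) <
          w (∑ k ∈ Finset.range ℓ, ((ρ^k) β - β)) := by
        refine lt_of_lt_of_le ?_ hD
        rw [WithTop.coe_lt_coe]
        exact hs't'
      exact lt_of_lt_of_le (lt_min hlt1 hlt2) (w.map_sub _ _)
    rw [hwlβ] at hgt
    exact lt_irrefl _ hgt

  -- every prime divisor of the order of an element of `G_ε` equals `p`
  have hordp : ∀ σ : L ≃ₐ[K] L,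
      (((toLex (0,2) : ℤ ×ₗ ℤ)) : WithTop (ℤ ×ₗ ℤ)) ≤ iG σ →
      ∀ ℓ : ℕ, ℓ.Prime → ℓ ∣ orderOf σ → ℓ = p := by
    intro σ hσε ℓ hℓ hdvd
    set m : ℕ := orderOf σ / ℓ with hm
    have hordpos : 0 < orderOf σ := orderOf_pos σ
    have hρpow : (σ ^ m) ^ ℓ = 1 := by
      rw [← pow_mul, hm, Nat.div_mul_cancel hdvd]
      exact pow_orderOf_eq_one σ
    have hρne : σ ^ m ≠ 1 := by
      intro h
      have h2 : orderOf σ ∣ m := orderOf_dvd_of_pow_eq_one h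
      have hmpos : 0 < m := Nat.div_pos (Nat.le_of_dvd hordpos hdvd) hℓ.pos
      have h3 := Nat.le_of_dvd hmpos h2
      have h4 : m < orderOf σ := Nat.div_lt_self hordpos hℓ.one_lt
      omega
    have hρε : (((toLex (0,2) : ℤ ×ₗ ℤ)) : WithTop (ℤ ×ₗ ℤ)) ≤ iG (σ ^ m) := by
      refine le_trans hσε ?_
      have := iG_mono σ (m : ℤ)
      rwa [zpow_natCast] at this
    have hw := Hcore (σ ^ m) hρne hρε ℓ hℓ hρpow
    rcases hp with hp0 | hpp
    · exfalso
      rw [hchar0 hp0 ℓ hℓ.pos] at hw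
      exact lt_irrefl _ hw
    · by_contra hne
      have hco : Nat.Coprime ℓ p := (Nat.coprime_primes hℓ hpp).mpr hne
      have hic : IsCoprime (ℓ : ℤ) (p : ℤ) := by
        rw [Int.isCoprime_iff_gcd_eq_one, Int.gcd_natCast_natCast]
        exact hco
      obtain ⟨u, v, huv⟩ := hic
      have hwp := hcharp hpp.pos
      have h1L : (1 : L) = (u : ℤ) * (ℓ : ℕ) + (v : ℤ) * (p : ℕ) := by
        have := congrArg (fun z : ℤ => (z : L)) huv
        push_cast at this
        rw [← this]
      have e1 : (0 : WithTop (ℤ ×ₗ ℤ)) < w (((u : ℤ) : L) * ((ℓ : ℕ) : L)) := by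
        rw [w.map_mul]
        exact lt_of_lt_of_le hw (le_add_of_nonneg_left (wint u))
      have e2 : (0 : WithTop (ℤ ×ₗ ℤ)) < w (((v : ℤ) : L) * ((p : ℕ) : L)) := by
        rw [w.map_mul]
        exact lt_of_lt_of_le hwp (le_add_of_nonneg_left (wint v))
      have := w.map_lt_add e1 e2
      rw [← h1L, w.map_one] at this
      exact lt_irrefl _ this
  refine ⟨?_, ?_, ?_⟩
  · -- part 1
    intro σ hσ hn
    obtain ⟨⟨x0, hx00, hx0⟩, hle⟩ := hiG σ hσ
    obtain ⟨y, hy0, hy⟩ := hres x0 hx00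
    have hpos : 0 < iG σ := by
      rw [← hx0]
      have hrw : σ x0 - x0 = σ (x0 - algebraMap K L y) - (x0 - algebraMap K L y) := by
        rw [map_sub, AlgEquiv.commutes]
        ring
      rw [hrw]
      exact lt_of_lt_of_le hy (w.map_le_sub (le_of_eq (hinvar σ _).symm) le_rfl)
    obtain ⟨γ, hγ⟩ := WithTop.ne_top_iff_exists.mp (iG_ne_top σ hσ)
    rw [heps2] at hn
    rw [← hγ] at hn hpos ⊢
    rw [WithTop.coe_eq_coe]
    apply aux_gap
    · rw [← WithTop.coe_zero, WithTop.coe_lt_coe] at hpos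
      exact hpos
    · have := lt_of_not_ge hn
      rwa [WithTop.coe_lt_coe] at this
  · -- part 2
    intro σ hσε n hpn
    rw [heps2] at hσε
    by_cases hσ1 : σ = 1
    · subst hσ1
      rw [one_zpow]
    · have hco : IsCoprime (n : ℤ) ((orderOf σ : ℕ) : ℤ) := by
        rw [Int.isCoprime_iff_gcd_eq_one]
        by_contra hne
        obtain ⟨ℓ, hℓ, hdvd⟩ := Nat.exists_prime_and_dvd hne
        have hdn : (ℓ : ℤ) ∣ n :=
          dvd_trans (Int.natCast_dvd_natCast.mpr hdvd) (Int.gcd_dvd_left _ _)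
        have hdo : (ℓ : ℤ) ∣ ((orderOf σ : ℕ) : ℤ) :=
          dvd_trans (Int.natCast_dvd_natCast.mpr hdvd) (Int.gcd_dvd_right _ _)
        have hdo' : ℓ ∣ orderOf σ := Int.natCast_dvd_natCast.mp hdo
        have hlp := hordp σ hσε ℓ hℓ hdo'
        rw [hlp] at hdn
        exact hpn hdn
      obtain ⟨u, v, huv⟩ := hco
      have hord1 : σ ^ (((orderOf σ : ℕ)) : ℤ) = 1 := by
        rw [zpow_natCast]
        exact pow_orderOf_eq_one σ
      have hσrw : σ = (σ ^ n) ^ u := by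
        calc σ = σ ^ (u * n + v * ((orderOf σ : ℕ) : ℤ)) := by rw [huv, zpow_one]
        _ = (σ ^ n) ^ u * (σ ^ (((orderOf σ : ℕ)) : ℤ)) ^ v := by
            rw [zpow_add, mul_comm u n, zpow_mul, mul_comm v (((orderOf σ : ℕ)) : ℤ), zpow_mul]
        _ = (σ ^ n) ^ u := by rw [hord1, one_zpow, mul_one]
      refine le_antisymm ?_ (iG_mono σ n)
      conv_rhs => rw [hσrw]
      exact iG_mono (σ ^ n) u
  · -- part 3
    intro σ τ h
    have h1' : τ ∈ Subgroup.zpowers σ := h ▸ Subgroup.mem_zpowers τ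
    have h2' : σ ∈ Subgroup.zpowers τ := h.symm ▸ Subgroup.mem_zpowers σ
    obtain ⟨n, hn⟩ := Subgroup.mem_zpowers_iff.mp h1'
    obtain ⟨m, hm⟩ := Subgroup.mem_zpowers_iff.mp h2'
    have e1 := iG_mono τ m
    rw [hm] at e1
    have e2 := iG_mono σ n
    rw [hn] at e2
    exact le_antisymm e2 e1
end

section
/- Let V ⊆ W be a monogenic integral extension of henselian ℤ²-valuation rings with L/K Galois of group G, let H ≤ G, K' = L^H, and V' the integral closure of V in K'. Then for every τ ∈ G/H with τ ≠ 1, the minimum i_{G/H}(τ) of {v(τ(y) − y) : y ∈ V'} exists and equals Σ_{σ ↦ τ} i_G(σ), the sum over all σ ∈ G mapping to τ. -/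
open scoped Polynomial
open Polynomial

namespace IGAux

variable {L : Type} [Field L] (w : AddValuation L (WithTop (ℤ ×ₗ ℤ)))

/-- The valuation subring of `w` (as a `Subring`). -/
def O : Subring L where
  carrier := {x | 0 ≤ w x}
  one_mem' := by simp
  zero_mem' := by simp
  mul_mem' := by
    intro x y hx hy
    have : w (x * y) = w x + w y := w.map_mul x y
    simp only [Set.mem_setOf_eq] at *
    rw [this]
    exact add_nonneg hx hy
  add_mem' := by
    intro x y hx hy
    exact le_trans (le_min hx hy) (w.map_add x y)
  neg_mem' := by
    intro x hx
    simpa only [Set.mem_setOf_eq, w.map_neg] using hx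

lemma mem_O {x : L} : x ∈ O w ↔ 0 ≤ w x := Iff.rfl

lemma w_le_of_dvd {c d : O w} (h : c ∣ d) : w (c : L) ≤ w (d : L) := by
  obtain ⟨e, rfl⟩ := h
  have : ((c * e : O w) : L) = (c : L) * (e : L) := rfl
  rw [this, w.map_mul]
  exact le_add_of_nonneg_right e.2

lemma eval_mem {p : L[X]} (hp : ∀ i, p.coeff i ∈ O w) {x : L} (hx : x ∈ O w) :
    p.eval x ∈ O w := by
  rw [Polynomial.eval_eq_sum_range]
  exact Subring.sum_mem _ fun i _ => Subring.mul_mem _ (hp i) (Subring.pow_mem _ hx i)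

lemma w_eval_sub {p : L[X]} (hp : ∀ i, p.coeff i ∈ O w) {u v : L}
    (hu : u ∈ O w) (hv : v ∈ O w) :
    w (u - v) ≤ w (p.eval u - p.eval v) := by
  have hco : (↑p.coeffs : Set L) ⊆ (O w : Set L) := by
    intro c hc
    rw [Finset.mem_coe, Polynomial.mem_coeffs_iff] at hc
    obtain ⟨n, _, rfl⟩ := hc
    exact hp n
  set q := p.toSubring (O w) hco with hq
  have hmap : q.map (O w).subtype = p := p.map_toSubring _ hco
  have hdvd : ((⟨u, hu⟩ : O w) - ⟨v, hv⟩) ∣ q.eval ⟨u, hu⟩ - q.eval ⟨v, hv⟩ :=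
    Polynomial.sub_dvd_eval_sub _ _ q
  have key := w_le_of_dvd w hdvd
  have h1 : ((q.eval ⟨u, hu⟩ : O w) : L) = p.eval u := by
    rw [← hmap, Polynomial.eval_map]
    exact (Polynomial.eval₂_at_apply (p := q) (O w).subtype ⟨u, hu⟩).symm
  have h2 : ((q.eval ⟨v, hv⟩ : O w) : L) = p.eval v := by
    rw [← hmap, Polynomial.eval_map]
    exact (Polynomial.eval₂_at_apply (p := q) (O w).subtype ⟨v, hv⟩).symm
  have e1 : (((⟨u, hu⟩ : O w) - ⟨v, hv⟩ : O w) : L) = u - v := rfl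
  have e2 : ((q.eval ⟨u, hu⟩ - q.eval ⟨v, hv⟩ : O w) : L) = p.eval u - p.eval v := by
    push_cast [h1, h2]
    rfl
  rwa [e1, e2] at key

lemma w_prod {ι : Type*} (s : Finset ι) (f : ι → L) :
    w (∏ i ∈ s, f i) = ∑ i ∈ s, w (f i) := by
  classical
  induction s using Finset.induction with
  | empty => simp
  | insert _ _ h ih => rw [Finset.prod_insert h, Finset.sum_insert h, w.map_mul, ih]

end IGAux

/-- Let `V ⊆ W` be a monogenic integral extension of henselian
`ℤ²`-valuation rings with `L/K` Galois of group `G`, let `H ≤ G`, `K' = L^H`, and `V'` the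
integral closure of `V` in `K'` (i.e. `V' = W ∩ K'`).  Then for every coset `τ = σ₀H` with
`τ ≠ 1` (i.e. `σ₀ ∉ H`), the minimum `i_{G/H}(τ)` of `{w(τ(y) − y) : y ∈ V'}` exists and
equals `Σ_{σ ↦ τ} i_G(σ)`, the sum over all `σ ∈ G` lying in the coset `σ₀H`. -/
theorem iG_quotient_eq_sum
    (K L : Type) [Field K] [Field L] [Algebra K L] [FiniteDimensional K L] [IsGalois K L]
    [Fintype (L ≃ₐ[K] L)]
    (w : AddValuation L (WithTop (ℤ ×ₗ ℤ)))
    (hsurj : ∀ γ : ℤ ×ₗ ℤ, ∃ x : L, w x = (γ : WithTop (ℤ ×ₗ ℤ)))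
    (hinvar : ∀ (σ : L ≃ₐ[K] L) (x : L), w (σ x) = w x)
    (hK : ∀ (x : K) (γ : ℤ ×ₗ ℤ), w (algebraMap K L x) = (γ : WithTop (ℤ ×ₗ ℤ)) →
      ∃ a b : ℤ, γ = toLex (a, (Nat.card (L ≃ₐ[K] L) : ℤ) * b))
    (hres : ∀ x : L, 0 ≤ w x → ∃ y : K, 0 ≤ w (algebraMap K L y) ∧
      0 < w (x - algebraMap K L y))
    (VK : Subring K) (hVK : ∀ x : K, x ∈ VK ↔ 0 ≤ w (algebraMap K L x))
    [HenselianLocalRing VK]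
    (a : L) (ha : 0 ≤ w a)
    (hmono : ∀ x : L, 0 ≤ w x → ∃ q : K[X],
      (∀ i, 0 ≤ w (algebraMap K L (q.coeff i))) ∧ x = Polynomial.aeval a q)
    (iG : (L ≃ₐ[K] L) → WithTop (ℤ ×ₗ ℤ)) (h1 : iG 1 = ⊤)
    (hiG : ∀ σ : L ≃ₐ[K] L, σ ≠ 1 →
      (∃ x : L, 0 ≤ w x ∧ w (σ x - x) = iG σ) ∧
      (∀ x : L, 0 ≤ w x → iG σ ≤ w (σ x - x)))
    (H : Subgroup (L ≃ₐ[K] L)) [DecidablePred (· ∈ H)] :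
    ∀ σ₀ : L ≃ₐ[K] L, σ₀ ∉ H →
      (∃ y : L, y ∈ IntermediateField.fixedField H ∧ 0 ≤ w y ∧
        w (σ₀ y - y) =
          ∑ σ ∈ Finset.univ.filter (fun σ : L ≃ₐ[K] L => σ₀⁻¹ * σ ∈ H), iG σ) ∧
      (∀ y : L, y ∈ IntermediateField.fixedField H → 0 ≤ w y →
        (∑ σ ∈ Finset.univ.filter (fun σ : L ≃ₐ[K] L => σ₀⁻¹ * σ ∈ H), iG σ) ≤
          w (σ₀ y - y)) := by
  classical
  intro σ₀ hσ₀
  -- Every automorphism fixing `a` is the identity.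
  have hfixO : ∀ σ : L ≃ₐ[K] L, σ a = a → ∀ u : L, 0 ≤ w u → σ u = u := by
    intro σ hσa u hu
    obtain ⟨q, hq, rfl⟩ := hmono u hu
    have h : Polynomial.aeval (σ a) q = σ (Polynomial.aeval a q) :=
      Polynomial.aeval_algHom_apply (σ : L →ₐ[K] L) a q
    rw [hσa] at h
    exact h.symm
  have hfix : ∀ σ : L ≃ₐ[K] L, σ a = a → σ = 1 := by
    intro σ hσa
    ext x
    by_cases hx : x = 0
    · simp [hx]
    have hxt : w x ≠ ⊤ := w.ne_top_iff.mpr hx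
    obtain ⟨γ, hγ⟩ := WithTop.ne_top_iff_exists.mp hxt
    obtain ⟨z, hz⟩ := hsurj (max 0 (-γ))
    have hz0 : 0 ≤ w z := by
      rw [hz]
      exact_mod_cast le_max_left 0 (-γ)
    have hxz : 0 ≤ w (x * z) := by
      rw [w.map_mul, ← hγ, hz, ← WithTop.coe_add]
      have : (0 : ℤ ×ₗ ℤ) ≤ γ + max 0 (-γ) := by
        have h := le_max_right (0 : ℤ ×ₗ ℤ) (-γ)
        calc (0 : ℤ ×ₗ ℤ) = γ + (-γ) := by ring
        _ ≤ γ + max 0 (-γ) := add_le_add_right h γ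
      exact_mod_cast this
    have hzfix : σ z = z := hfixO σ hσa z hz0
    have hxzfix : σ (x * z) = x * z := hfixO σ hσa _ hxz
    have hzne : z ≠ 0 := by
      intro h
      rw [h, w.map_zero] at hz
      exact (WithTop.top_ne_coe hz)
    have : σ x * z = x * z := by
      calc σ x * z = σ x * σ z := by rw [hzfix]
      _ = σ (x * z) := (map_mul σ x z).symm
      _ = x * z := hxzfix
    exact mul_right_cancel₀ hzne this
  have hinj : ∀ σ τ : L ≃ₐ[K] L, σ a = τ a → σ = τ := by
    intro σ τ h
    have h2 : (τ⁻¹ * σ) a = a := by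
      have : (τ⁻¹ * σ) a = τ⁻¹ (σ a) := rfl
      rw [this, h]
      exact (AlgEquiv.symm_apply_apply τ a)
    have := hfix _ h2
    rw [inv_mul_eq_one] at this
    exact this.symm
  -- `iG σ = w (σ a - a)` for `σ ≠ 1`.
  have hiGa : ∀ σ : L ≃ₐ[K] L, σ ≠ 1 → iG σ = w (σ a - a) := by
    intro σ hσ
    refine le_antisymm ((hiG σ hσ).2 a ha) ?_
    obtain ⟨x, hx0, hxe⟩ := (hiG σ hσ).1
    rw [← hxe]
    obtain ⟨q, hq, rfl⟩ := hmono x hx0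
    set qL := q.map (algebraMap K L) with hqL
    have hcoeff : ∀ i, qL.coeff i ∈ IGAux.O w := by
      intro i
      rw [hqL, Polynomial.coeff_map]
      exact hq i
    have e1 : Polynomial.aeval a q = qL.eval a := by
      rw [hqL, Polynomial.eval_map, Polynomial.aeval_def]
    have e2 : σ (Polynomial.aeval a q) = qL.eval (σ a) := by
      have h : Polynomial.aeval (σ a) q = σ (Polynomial.aeval a q) :=
        Polynomial.aeval_algHom_apply (σ : L →ₐ[K] L) a q
      rw [← h, hqL, Polynomial.eval_map, Polynomial.aeval_def]
    rw [e2, e1]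
    exact IGAux.w_eval_sub w hcoeff (by rw [IGAux.mem_O, hinvar]; exact ha) ha
  -- The coefficients of `∏ (X - C (h a))`.
  have hha : ∀ h : ↥H, 0 ≤ w ((h : L ≃ₐ[K] L) a) := fun h => by rw [hinvar]; exact ha
  set F' : (IGAux.O w)[X] :=
    ∏ h : ↥H, (Polynomial.X - Polynomial.C (⟨(h : L ≃ₐ[K] L) a, hha h⟩ : IGAux.O w)) with hF'def
  set F : L[X] := F'.map (IGAux.O w).subtype with hFdef
  have hFeq : F = ∏ h : ↥H, (Polynomial.X - Polynomial.C ((h : L ≃ₐ[K] L) a)) := by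
    rw [hFdef, hF'def, Polynomial.map_prod]
    simp
  have hF'monic : F'.Monic := monic_prod_of_monic _ _ fun _ _ => monic_X_sub_C _
  have hFmonic : F.Monic := hF'monic.map _
  have hFcoeff : ∀ i, F.coeff i ∈ IGAux.O w := by
    intro i
    rw [hFdef, Polynomial.coeff_map]
    exact (F'.coeff i).2
  -- The coefficients of `F` lie in the fixed field of `H`.
  have hFfix : ∀ i, F.coeff i ∈ IntermediateField.fixedField H := by
    intro i
    have key : ∀ τ : ↥H, Polynomial.map ((τ : L ≃ₐ[K] L) : L →+* L) F = F := by
      intro τ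
      rw [hFeq, Polynomial.map_prod]
      simp only [Polynomial.map_sub, Polynomial.map_X, Polynomial.map_C]
      refine Fintype.prod_equiv (Equiv.mulLeft τ) _ _ ?_
      intro h
      show (Polynomial.X : L[X]) - Polynomial.C (((τ : L ≃ₐ[K] L) : L →+* L) ((h : L ≃ₐ[K] L) a))
          = Polynomial.X - Polynomial.C (((Equiv.mulLeft τ h : ↥H) : L ≃ₐ[K] L) a)
      rfl
    intro τ
    have := key τ
    have h2 := congrArg (fun p => Polynomial.coeff p i) this
    simp only [Polynomial.coeff_map] at h2
    exact h2
  -- `σ₀ * h ≠ 1` for `h ∈ H`.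
  have hσ₀h : ∀ h : ↥H, σ₀ * (h : L ≃ₐ[K] L) ≠ 1 := by
    intro h he
    apply hσ₀
    have h2 : σ₀ = ((h : L ≃ₐ[K] L))⁻¹ := eq_inv_of_mul_eq_one_left he
    rw [h2]
    exact H.inv_mem h.2
  -- Each factor `a - σ₀ (h a)` is nonzero.
  have hfac : ∀ h : ↥H, a - σ₀ ((h : L ≃ₐ[K] L) a) ≠ 0 := by
    intro h h0
    have : σ₀ ((h : L ≃ₐ[K] L) a) = a := by
      have := sub_eq_zero.mp h0
      exact this.symm
    have h2 : (σ₀ * (h : L ≃ₐ[K] L)) a = (1 : L ≃ₐ[K] L) a := by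
      show σ₀ ((h : L ≃ₐ[K] L) a) = a
      exact this
    exact hσ₀h h (hinj _ _ h2)
  -- The key sum.
  set T := ∑ σ ∈ Finset.univ.filter (fun σ : L ≃ₐ[K] L => σ₀⁻¹ * σ ∈ H), iG σ with hTdef
  have hT : T = ∑ h : ↥H, w (a - σ₀ ((h : L ≃ₐ[K] L) a)) := by
    rw [hTdef]
    rw [show (∑ σ ∈ Finset.univ.filter (fun σ : L ≃ₐ[K] L => σ₀⁻¹ * σ ∈ H), iG σ)
        = ∑ h : ↥H, iG (σ₀ * (h : L ≃ₐ[K] L)) from ?_]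
    · refine Finset.sum_congr rfl ?_
      intro h _
      rw [hiGa _ (hσ₀h h), w.map_sub_swap]
      rfl
    · refine (Finset.sum_bij (fun (h : ↥H) _ => σ₀ * (h : L ≃ₐ[K] L)) ?_ ?_ ?_ ?_).symm
      · intro h _
        simp only [Finset.mem_filter, Finset.mem_univ, true_and]
        rw [inv_mul_cancel_left]
        exact h.2
      · intro h₁ _ h₂ _ he
        exact Subtype.ext (mul_left_cancel he)
      · intro σ hσ
        simp only [Finset.mem_filter, Finset.mem_univ, true_and] at hσ
        exact ⟨⟨σ₀⁻¹ * σ, hσ⟩, Finset.mem_univ _, by simp⟩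
      · intro h _
        rfl
  -- The lower bound.
  have hlow : ∀ y : L, y ∈ IntermediateField.fixedField H → 0 ≤ w y → T ≤ w (σ₀ y - y) := by
    intro y hyH hy0
    have hyfix : ∀ τ : ↥H, (τ : L ≃ₐ[K] L) y = y := fun τ => hyH τ
    obtain ⟨g, hg, hyg⟩ := hmono y hy0
    set gL := g.map (algebraMap K L) with hgLdef
    have hgL : ∀ i, gL.coeff i ∈ IGAux.O w := by
      intro i
      rw [hgLdef, Polynomial.coeff_map]
      exact hg i
    have hygL : y = gL.eval a := by
      rw [hyg, hgLdef, Polynomial.eval_map, Polynomial.aeval_def]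
    set p : L[X] := gL - Polynomial.C y with hpdef
    have hpcoeff : ∀ i, p.coeff i ∈ IGAux.O w := by
      intro i
      rw [hpdef, Polynomial.coeff_sub]
      refine Subring.sub_mem _ (hgL i) ?_
      rw [Polynomial.coeff_C]
      split
      · exact hy0
      · exact Subring.zero_mem _
    have hproot : ∀ h : ↥H, p.eval ((h : L ≃ₐ[K] L) a) = 0 := by
      intro h
      have hh : Polynomial.aeval ((h : L ≃ₐ[K] L) a) g = (h : L ≃ₐ[K] L) (Polynomial.aeval a g) :=
        Polynomial.aeval_algHom_apply (((h : L ≃ₐ[K] L)) : L →ₐ[K] L) a g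
      rw [hpdef, Polynomial.eval_sub, Polynomial.eval_C, sub_eq_zero, hgLdef,
        Polynomial.eval_map, ← Polynomial.aeval_def, hh, ← hyg]
      exact hyfix h
    have hinjH : Function.Injective (fun h : ↥H => (h : L ≃ₐ[K] L) a) := by
      intro h₁ h₂ he
      exact Subtype.ext (hinj _ _ he)
    have hdvd : F ∣ p := by
      rw [hFeq]
      refine Fintype.prod_dvd_of_coprime
        (Polynomial.pairwise_coprime_X_sub_C hinjH) ?_
      intro h
      rw [Polynomial.dvd_iff_isRoot]
      exact hproot h
    -- division in the valuation ring
    have hco : (↑p.coeffs : Set L) ⊆ (IGAux.O w : Set L) := by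
      intro c hc
      rw [Finset.mem_coe, Polynomial.mem_coeffs_iff] at hc
      obtain ⟨n, _, rfl⟩ := hc
      exact hpcoeff n
    set p' := p.toSubring (IGAux.O w) hco with hp'def
    have hp'map : p'.map (IGAux.O w).subtype = p := p.map_toSubring _ hco
    have hmodL : p %ₘ F = 0 := (Polynomial.modByMonic_eq_zero_iff_dvd hFmonic).mpr hdvd
    have hmod : p' %ₘ F' = 0 := by
      have hminj : Function.Injective ((IGAux.O w).subtype : IGAux.O w →+* L) :=
        Subtype.coe_injective
      apply Polynomial.map_injective _ hminj
      rw [Polynomial.map_modByMonic _ hF'monic, hp'map, ← hFdef, hmodL, Polynomial.map_zero]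
    set Q : L[X] := (p' /ₘ F').map (IGAux.O w).subtype with hQdef
    have hfact : p = F * Q := by
      conv_lhs => rw [← hp'map, ← Polynomial.modByMonic_add_div p' F']
      rw [hmod, zero_add, Polynomial.map_mul, ← hFdef, ← hQdef]
    have hQcoeff : ∀ i, Q.coeff i ∈ IGAux.O w := by
      intro i
      rw [hQdef, Polynomial.coeff_map]
      exact ((p' /ₘ F').coeff i).2
    -- apply σ₀
    set σR : L →+* L := (σ₀ : L →ₐ[K] L).toRingHom with hσRdef
    have hσR : ∀ x : L, σR x = σ₀ x := fun x => rfl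
    have happ := congrArg (Polynomial.map σR) hfact
    have hgLσ : gL.map σR = gL := by
      rw [hgLdef, Polynomial.map_map]
      congr 1
      ext c
      exact σ₀.commutes c
    have hLHS : p.map σR = gL - Polynomial.C (σ₀ y) := by
      rw [hpdef, Polynomial.map_sub, hgLσ, Polynomial.map_C]
      rfl
    rw [hLHS, Polynomial.map_mul] at happ
    have heval := congrArg (Polynomial.eval a) happ
    rw [Polynomial.eval_sub, Polynomial.eval_C, Polynomial.eval_mul, ← hygL] at heval
    have hP : (F.map σR).eval a = ∏ h : ↥H, (a - σ₀ ((h : L ≃ₐ[K] L) a)) := by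
      rw [hFeq, Polynomial.map_prod, Polynomial.eval_prod]
      refine Finset.prod_congr rfl ?_
      intro h _
      rw [Polynomial.map_sub, Polynomial.map_X, Polynomial.map_C, Polynomial.eval_sub,
        Polynomial.eval_X, Polynomial.eval_C]
      rfl
    have hc : 0 ≤ w ((Q.map σR).eval a) := by
      refine IGAux.eval_mem w ?_ ha
      intro i
      rw [Polynomial.coeff_map, IGAux.mem_O, hσR, hinvar]
      exact hQcoeff i
    rw [hP] at heval
    have hwy : w (σ₀ y - y) = w (y - σ₀ y) := w.map_sub_swap _ _
    rw [hwy, heval, w.map_mul, hT, IGAux.w_prod]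
    exact le_add_of_nonneg_right hc
  refine ⟨?_, hlow⟩
  -- existence of a `y` attaining the bound
  set σR : L →+* L := (σ₀ : L →ₐ[K] L).toRingHom with hσRdef
  have hσR : ∀ x : L, σR x = σ₀ x := fun x => rfl
  have hP : (F.map σR).eval a = ∏ h : ↥H, (a - σ₀ ((h : L ≃ₐ[K] L) a)) := by
    rw [hFeq, Polynomial.map_prod, Polynomial.eval_prod]
    refine Finset.prod_congr rfl ?_
    intro h _
    rw [Polynomial.map_sub, Polynomial.map_X, Polynomial.map_C, Polynomial.eval_sub,
      Polynomial.eval_X, Polynomial.eval_C]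
    rfl
  have hPne : (∏ h : ↥H, (a - σ₀ ((h : L ≃ₐ[K] L) a))) ≠ 0 := by
    refine Finset.prod_ne_zero_iff.mpr ?_
    intro h _
    exact hfac h
  have hwP : w (∏ h : ↥H, (a - σ₀ ((h : L ≃ₐ[K] L) a))) = T := by
    rw [IGAux.w_prod, hT]
  have hTne : T ≠ ⊤ := by
    rw [← hwP]
    exact w.ne_top_iff.mpr hPne
  have hFa : F.eval a = 0 := by
    rw [hFeq, Polynomial.eval_prod]
    refine Finset.prod_eq_zero (Finset.mem_univ (1 : ↥H)) ?_
    rw [Polynomial.eval_sub, Polynomial.eval_X, Polynomial.eval_C]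
    show a - (((1 : ↥H) : L ≃ₐ[K] L)) a = 0
    rw [OneMemClass.coe_one]
    show a - a = 0
    rw [sub_self]
  set D : L[X] := F.map σR - F with hDdef
  have hDeval : D.eval a = ∏ h : ↥H, (a - σ₀ ((h : L ≃ₐ[K] L) a)) := by
    rw [hDdef, Polynomial.eval_sub, hFa, sub_zero, hP]
  have hex : ∃ i ∈ D.support, w (D.coeff i * a ^ i) ≤ T := by
    by_contra hcon
    push_neg at hcon
    have hlt : T < w (∑ i ∈ D.support, D.coeff i * a ^ i) :=
      w.map_lt_sum hTne fun i hi => hcon i hi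
    have : (∑ i ∈ D.support, D.coeff i * a ^ i) = D.eval a := by
      rw [Polynomial.eval_eq_sum, Polynomial.sum_def]
    rw [this, hDeval, hwP] at hlt
    exact lt_irrefl _ hlt
  obtain ⟨i, _, hile⟩ := hex
  refine ⟨F.coeff i, hFfix i, hFcoeff i, ?_⟩
  have hDc : D.coeff i = σ₀ (F.coeff i) - F.coeff i := by
    rw [hDdef, Polynomial.coeff_sub, Polynomial.coeff_map, hσR]
  have hup : w (σ₀ (F.coeff i) - F.coeff i) ≤ T := by
    rw [← hDc]
    calc w (D.coeff i) ≤ w (D.coeff i) + w (a ^ i) :=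
          le_add_of_nonneg_right (by
            have : (a : L) ^ i ∈ IGAux.O w := Subring.pow_mem _ ha i
            exact this)
    _ = w (D.coeff i * a ^ i) := (w.map_mul _ _).symm
    _ ≤ T := hile
  exact le_antisymm hup (hlow (F.coeff i) (hFfix i) (hFcoeff i))
end
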